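/- arXiv:1201.4093 — 3 statements merged into one kernel-verified Lean document; each statement's English description precedes it below -/
import Mathlib

section
/- The sum over all connected simple graphs G on the labeled vertex set {1,...,n} (n ≥ 1) of (-1)^{e(G)} equals (-1)^{n-1} * (n-1)!. -/
open Finset
open scoped Classical

namespace ConnSum

noncomputable def E {V : Type*} (G : SimpleGraph V) : ℕ := Nat.card G.edgeSet

lemma E_eq_card {V : Type*} [Fintype V] (G : SimpleGraph V) : E G = G.edgeFinset.card := by
  rw [E, Nat.card_eq_fintype_card, SimpleGraph.edgeFinset, Set.toFinset_card]

lemma sum_all (W : Type*) [Fintype W] [Fintype (SimpleGraph W)] :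
    ∑ G : SimpleGraph W, (-1 : ℤ) ^ E G = if Fintype.card W ≤ 1 then 1 else 0 := by
  classical
  set t : Finset (Sym2 W) := {e : Sym2 W | ¬ e.IsDiag}.toFinset with ht
  have h1 : ∑ G : SimpleGraph W, (-1 : ℤ) ^ E G = ∑ s ∈ t.powerset, (-1 : ℤ) ^ s.card := by
    refine Finset.sum_nbij' (fun G => G.edgeFinset) (fun s => SimpleGraph.fromEdgeSet ↑s)
      ?_ ?_ ?_ ?_ ?_
    · intro G _
      rw [Finset.mem_powerset]
      intro e he
      rw [SimpleGraph.mem_edgeFinset] at he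
      simp only [ht, Set.mem_toFinset, Set.mem_setOf_eq]
      exact G.not_isDiag_of_mem_edgeSet he
    · intro s _; exact Finset.mem_univ _
    · intro G _
      simp [SimpleGraph.coe_edgeFinset]
    · intro s hs
      rw [Finset.mem_powerset] at hs
      have : (SimpleGraph.fromEdgeSet (↑s : Set (Sym2 W))).edgeSet = ↑s := by
        rw [SimpleGraph.edgeSet_fromEdgeSet]
        rw [_root_.sdiff_eq_self_iff_disjoint, Set.disjoint_left]
        intro e he hes
        have := hs hes
        simp only [ht, Set.mem_toFinset, Set.mem_setOf_eq] at this
        exact this he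
      apply Finset.coe_injective
      rw [SimpleGraph.coe_edgeFinset, this]
    · intro G _
      rw [E_eq_card]
  rw [h1, Finset.sum_powerset_neg_one_pow_card]
  congr 1
  simp only [eq_iff_iff]
  constructor
  · intro h
    rw [Fintype.card_le_one_iff]
    intro a b
    by_contra hab
    have : s(a, b) ∈ t := by simp [ht, hab]
    rw [h] at this
    exact absurd this (Finset.notMem_empty _)
  · intro h
    rw [Finset.eq_empty_iff_forall_notMem]
    intro e he
    simp only [ht, Set.mem_toFinset, Set.mem_setOf_eq] at he
    obtain ⟨a, b⟩ := e
    exact he (by simp [Fintype.card_le_one_iff.mp h a b])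

end ConnSum
namespace ConnSum

lemma edgeSet_map {α β : Type*} (f : α ↪ β) (G : SimpleGraph α) :
    (G.map f).edgeSet = Sym2.map f '' G.edgeSet := by
  ext e
  refine Sym2.ind (fun u v => ?_) e
  simp only [SimpleGraph.mem_edgeSet, SimpleGraph.map_adj, Set.mem_image]
  constructor
  · rintro ⟨u', v', h, rfl, rfl⟩
    exact ⟨s(u', v'), h, by rw [Sym2.map_pair_eq]⟩
  · rintro ⟨e', he', hme⟩
    obtain ⟨u', v'⟩ := e'
    rw [Sym2.map_pair_eq, Sym2.eq_iff] at hme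
    rcases hme with ⟨rfl, rfl⟩ | ⟨rfl, rfl⟩
    · exact ⟨u', v', he', rfl, rfl⟩
    · exact ⟨v', u', (SimpleGraph.mem_edgeSet _).mp he'.symm, rfl, rfl⟩

variable {V : Type*}

/-- Glue a graph on `S` and a graph on `Sᶜ` into a graph on `V`. -/
def glue (S : Set V) (H : SimpleGraph S) (K : SimpleGraph ↥Sᶜ) : SimpleGraph V :=
  H.map (Function.Embedding.subtype _) ⊔ K.map (Function.Embedding.subtype _)

lemma glue_adj {S : Set V} {H : SimpleGraph S} {K : SimpleGraph ↥Sᶜ} {a b : V} :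
    (glue S H K).Adj a b ↔ (∃ (ha : a ∈ S) (hb : b ∈ S), H.Adj ⟨a, ha⟩ ⟨b, hb⟩) ∨
      (∃ (ha : a ∉ S) (hb : b ∉ S), K.Adj ⟨a, ha⟩ ⟨b, hb⟩) := by
  rw [glue, SimpleGraph.sup_adj, SimpleGraph.map_adj, SimpleGraph.map_adj]
  simp only [Function.Embedding.coe_subtype]
  constructor
  · rintro (⟨⟨a, ha⟩, ⟨b, hb⟩, h, rfl, rfl⟩ | ⟨⟨a, ha⟩, ⟨b, hb⟩, h, rfl, rfl⟩)
    · exact Or.inl ⟨ha, hb, h⟩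
    · exact Or.inr ⟨ha, hb, h⟩
  · rintro (⟨ha, hb, h⟩ | ⟨ha, hb, h⟩)
    · exact Or.inl ⟨⟨a, ha⟩, ⟨b, hb⟩, h, rfl, rfl⟩
    · exact Or.inr ⟨⟨a, ha⟩, ⟨b, hb⟩, h, rfl, rfl⟩

lemma E_glue [Fintype V] {S : Set V} (H : SimpleGraph S) (K : SimpleGraph ↥Sᶜ) :
    E (glue S H K) = E H + E K := by
  classical
  have h1 : (glue S H K).edgeSet =
      Sym2.map (Function.Embedding.subtype (· ∈ S)) '' H.edgeSet ∪
      Sym2.map (Function.Embedding.subtype (· ∈ Sᶜ)) '' K.edgeSet := by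
    rw [glue, SimpleGraph.edgeSet_sup, edgeSet_map, edgeSet_map]
  have hinjS : Function.Injective (Sym2.map (Function.Embedding.subtype (· ∈ S))) :=
    Sym2.map.injective (Function.Embedding.subtype _).injective
  have hinjT : Function.Injective (Sym2.map (Function.Embedding.subtype (· ∈ Sᶜ))) :=
    Sym2.map.injective (Function.Embedding.subtype _).injective
  have hdisj : Disjoint (Sym2.map (Function.Embedding.subtype (· ∈ S)) '' H.edgeSet)
      (Sym2.map (Function.Embedding.subtype (· ∈ Sᶜ)) '' K.edgeSet) := by
    rw [Set.disjoint_left]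
    rintro e ⟨e1, _, rfl⟩ ⟨e2, _, he⟩
    obtain ⟨⟨u, hu⟩, ⟨v, hv⟩⟩ := e1
    obtain ⟨⟨w, hw⟩, ⟨x, hx⟩⟩ := e2
    rw [Sym2.map_pair_eq, Sym2.map_pair_eq, Sym2.eq_iff] at he
    simp only [Function.Embedding.coe_subtype] at he
    rw [Set.mem_compl_iff] at hw
    rcases he with ⟨h1, _⟩ | ⟨h1, _⟩
    · exact hw (h1 ▸ hu)
    · exact hw (h1 ▸ hv)
  rw [E, E, E, h1, Nat.card_coe_set_eq, Nat.card_coe_set_eq, Nat.card_coe_set_eq,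
    Set.ncard_union_eq hdisj (Set.toFinite _) (Set.toFinite _),
    Set.ncard_image_of_injective _ hinjS, Set.ncard_image_of_injective _ hinjT]

end ConnSum

namespace ConnSum

variable {V : Type*}

lemma adj_mem_of_supp {G : SimpleGraph V} {v0 : V} {a b : V}
    (ha : a ∈ (G.connectedComponentMk v0).supp) (hab : G.Adj a b) :
    b ∈ (G.connectedComponentMk v0).supp := by
  rw [SimpleGraph.ConnectedComponent.mem_supp_iff, SimpleGraph.ConnectedComponent.eq] at *
  exact (hab.reachable.symm).trans ha

lemma supp_glue {S : Set V} {H : SimpleGraph S} {K : SimpleGraph ↥Sᶜ} {v0 : V}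
    (hv0 : v0 ∈ S) (hH : H.Connected) :
    ((glue S H K).connectedComponentMk v0).supp = S := by
  ext v
  rw [SimpleGraph.ConnectedComponent.mem_supp_iff, SimpleGraph.ConnectedComponent.eq]
  have key : ∀ (a b : V) (p : (glue S H K).Walk a b), a ∈ S → b ∈ S := by
    intro a b p
    induction p with
    | nil => exact id
    | cons h _ ih =>
      intro ha
      apply ih
      rcases glue_adj.mp h with ⟨_, hb, _⟩ | ⟨ha', _, _⟩
      · exact hb
      · exact absurd ha ha'
  constructor
  · intro h
    obtain ⟨p⟩ := h.symm
    exact key v0 v p hv0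
  · intro hv
    have h := hH.preconnected ⟨v, hv⟩ ⟨v0, hv0⟩
    have h2 := h.map ((SimpleGraph.Hom.ofLE (le_sup_left :
      H.map (Function.Embedding.subtype _) ≤ glue S H K)).comp
      (SimpleGraph.Embedding.map (Function.Embedding.subtype _) H).toHom)
    exact h2

lemma induce_supp_connected (G : SimpleGraph V) (v0 : V) :
    (G.induce ((G.connectedComponentMk v0).supp)).Connected := by
  apply SimpleGraph.induce_connected_of_patches v0
    (by rw [SimpleGraph.ConnectedComponent.mem_supp_iff])
  intro v hv
  rw [SimpleGraph.ConnectedComponent.mem_supp_iff, SimpleGraph.ConnectedComponent.eq] at hv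
  obtain ⟨q⟩ := hv
  set p := q.reverse with hp
  refine ⟨{x | x ∈ p.support}, ?_, p.start_mem_support, p.end_mem_support, ?_⟩
  · intro x hx
    rw [Set.mem_setOf_eq, SimpleGraph.Walk.mem_support_iff_exists_append] at hx
    obtain ⟨q1, q2, _⟩ := hx
    rw [SimpleGraph.ConnectedComponent.mem_supp_iff, SimpleGraph.ConnectedComponent.eq]
    exact q1.reachable.symm
  · exact (p.connected_induce_support).preconnected _ _

lemma glue_induce {G : SimpleGraph V} {v0 : V} {S : Set V}
    (hS : (G.connectedComponentMk v0).supp = S) :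
    glue S (G.induce S) (G.induce Sᶜ) = G := by
  subst hS
  ext a b
  rw [glue_adj]
  simp only [SimpleGraph.comap_adj, Function.Embedding.coe_subtype]
  constructor
  · rintro (⟨_, _, h⟩ | ⟨_, _, h⟩) <;> exact h
  · intro h
    by_cases ha : a ∈ (G.connectedComponentMk v0).supp
    · exact Or.inl ⟨ha, adj_mem_of_supp ha h, h⟩
    · exact Or.inr ⟨ha, fun hb => ha (adj_mem_of_supp hb h.symm), h⟩

lemma induce_glue_left {S : Set V} (H : SimpleGraph S) (K : SimpleGraph ↥Sᶜ) :
    (glue S H K).induce S = H := by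
  ext ⟨a, ha⟩ ⟨b, hb⟩
  simp only [SimpleGraph.comap_adj, Function.Embedding.coe_subtype, glue_adj]
  constructor
  · rintro (⟨ha', hb', h⟩ | ⟨ha', _, _⟩)
    · exact h
    · exact absurd ha ha'
  · exact fun h => Or.inl ⟨ha, hb, h⟩

lemma induce_glue_right {S : Set V} (H : SimpleGraph S) (K : SimpleGraph ↥Sᶜ) :
    (glue S H K).induce Sᶜ = K := by
  ext ⟨a, ha⟩ ⟨b, hb⟩
  simp only [SimpleGraph.comap_adj, Function.Embedding.coe_subtype, glue_adj]
  constructor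
  · rintro (⟨ha', _, _⟩ | ⟨ha', hb', h⟩)
    · exact absurd ha' ha
    · exact h
  · exact fun h => Or.inr ⟨ha, hb, h⟩

variable [Fintype V]

set_option maxHeartbeats 1000000 in
lemma decomp (v0 : V) :
    ∑ G : SimpleGraph V, (-1 : ℤ) ^ E G =
      ∑ S ∈ univ.filter (fun S : Finset V => v0 ∈ S),
        (∑ H ∈ univ.filter (fun H : SimpleGraph ↥(S : Set V) => H.Connected),
          (-1 : ℤ) ^ E H) *
        (∑ K : SimpleGraph ↥((S : Set V)ᶜ), (-1 : ℤ) ^ E K) := by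
  classical
  have hfib : ∑ S ∈ univ.filter (fun S : Finset V => v0 ∈ S),
      ∑ G ∈ univ.filter (fun G : SimpleGraph V =>
        (G.connectedComponentMk v0).supp.toFinset = S), (-1 : ℤ) ^ E G =
      ∑ G : SimpleGraph V, (-1 : ℤ) ^ E G := by
    apply Finset.sum_fiberwise_of_maps_to
    intro G _
    exact Finset.mem_filter.mpr ⟨Finset.mem_univ _, Set.mem_toFinset.mpr
      ((SimpleGraph.ConnectedComponent.mem_supp_iff _ _).mpr rfl)⟩
  rw [← hfib]
  refine Finset.sum_congr rfl ?_
  intro S hS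
  rw [Finset.mem_filter] at hS
  have hv0S : v0 ∈ (S : Set V) := hS.2
  rw [Finset.sum_mul_sum, ← Finset.sum_product']
  refine Finset.sum_nbij'
    (fun G => (G.induce (S : Set V), G.induce ((S : Set V)ᶜ)))
    (fun p => glue (S : Set V) p.1 p.2) ?_ ?_ ?_ ?_ ?_
  · intro G hG
    rw [Finset.mem_filter] at hG
    have hsupp : (G.connectedComponentMk v0).supp = (S : Set V) := by
      rw [← hG.2, Set.coe_toFinset]
    rw [Finset.mem_product, Finset.mem_filter]
    refine ⟨⟨Finset.mem_univ _, ?_⟩, Finset.mem_univ _⟩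
    rw [← hsupp]
    exact induce_supp_connected G v0
  · intro p hp
    rw [Finset.mem_product, Finset.mem_filter] at hp
    rw [Finset.mem_filter]
    refine ⟨Finset.mem_univ _, ?_⟩
    exact (Set.toFinset_congr (supp_glue hv0S hp.1.2)).trans (by simp)
  · intro G hG
    rw [Finset.mem_filter] at hG
    have hsupp : (G.connectedComponentMk v0).supp = (S : Set V) := by
      rw [← hG.2, Set.coe_toFinset]
    exact glue_induce hsupp
  · intro p hp
    simp only [induce_glue_left, induce_glue_right]
  · intro G hG
    rw [Finset.mem_filter] at hG
    have hsupp : (G.connectedComponentMk v0).supp = (S : Set V) := by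
      rw [← hG.2, Set.coe_toFinset]
    conv_lhs => rw [← glue_induce hsupp]
    rw [E_glue, pow_add]

end ConnSum

namespace ConnSum

lemma conn_sum_iso {W W' : Type*} [Fintype W] [Fintype W']
    [Fintype (SimpleGraph W)] [Fintype (SimpleGraph W')]
    [DecidablePred (fun H : SimpleGraph W => H.Connected)]
    [DecidablePred (fun H : SimpleGraph W' => H.Connected)] (e : W ≃ W') :
    ∑ H ∈ univ.filter (fun H : SimpleGraph W => H.Connected), (-1 : ℤ) ^ E H =
    ∑ H ∈ univ.filter (fun H : SimpleGraph W' => H.Connected), (-1 : ℤ) ^ E H := by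
  refine Finset.sum_nbij' (fun H => H.map e.toEmbedding) (fun H => H.map e.symm.toEmbedding)
    ?_ ?_ ?_ ?_ ?_
  · intro H hH
    rw [Finset.mem_filter] at *
    exact ⟨Finset.mem_univ _, ((SimpleGraph.Iso.map e H).connected_iff).mp hH.2⟩
  · intro H hH
    rw [Finset.mem_filter] at *
    exact ⟨Finset.mem_univ _, ((SimpleGraph.Iso.map e.symm H).connected_iff).mp hH.2⟩
  · intro H _
    show SimpleGraph.map e.symm.toEmbedding (SimpleGraph.map e.toEmbedding H) = H
    rw [SimpleGraph.map_symm, SimpleGraph.comap_map_eq]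
  · intro H _
    show SimpleGraph.map e.toEmbedding (SimpleGraph.map e.symm.toEmbedding H) = H
    rw [← SimpleGraph.comap_symm]
    exact SimpleGraph.comap_map_eq _ _
  · intro H _
    congr 1
    exact Nat.card_congr (SimpleGraph.Iso.mapEdgeSet (SimpleGraph.Iso.map e H))

noncomputable def f (m : ℕ) : ℤ :=
  ∑ H ∈ univ.filter (fun H : SimpleGraph (Fin m) => H.Connected), (-1 : ℤ) ^ E H

lemma conn_sum_eq_f (W : Type*) [Fintype W] [Fintype (SimpleGraph W)]
    [DecidablePred (fun H : SimpleGraph W => H.Connected)] :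
    ∑ H ∈ univ.filter (fun H : SimpleGraph W => H.Connected), (-1 : ℤ) ^ E H =
      f (Fintype.card W) := by
  rw [f]
  exact conn_sum_iso (Fintype.equivFin W)

lemma f_one : f 1 = 1 := by
  have hconn : ∀ H : SimpleGraph (Fin 1), H.Connected :=
    fun H => ⟨fun a b => by rw [Subsingleton.elim a b]⟩
  rw [f, Finset.filter_true_of_mem (fun H _ => hconn H)]
  have := sum_all (Fin 1)
  simpa using this

lemma rec_general (V : Type*) [Fintype V] (v0 : V) (h2 : 2 ≤ Fintype.card V) :
    f (Fintype.card V) + ((Fintype.card V : ℤ) - 1) * f (Fintype.card V - 1) = 0 := by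
  have h0 : ∑ G : SimpleGraph V, (-1 : ℤ) ^ E G = 0 := by
    rw [sum_all]
    rw [if_neg (by omega)]
  rw [decomp v0] at h0
  have hterm : ∀ S ∈ univ.filter (fun S : Finset V => v0 ∈ S),
      (∑ H ∈ univ.filter
          (fun H : SimpleGraph ↥(S : Set V) => H.Connected), (-1 : ℤ) ^ E H) *
        (∑ K : SimpleGraph ↥((S : Set V)ᶜ), (-1 : ℤ) ^ E K) =
      if Fintype.card V - S.card ≤ 1 then f S.card else 0 := by
    intro S _
    have hcard1 : Fintype.card ↥(S : Set V) = S.card := by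
      rw [Fintype.card_congr (Equiv.subtypeEquivRight (fun x => Finset.mem_coe))]
      exact Fintype.card_coe S
    have hcard2 : Fintype.card ↥((S : Set V)ᶜ) = Fintype.card V - S.card := by
      rw [Fintype.card_compl_set, hcard1]
    rw [conn_sum_eq_f, hcard1, sum_all, hcard2]
    split <;> simp
  have h1 := (Finset.sum_congr rfl hterm).symm.trans h0
  rw [← Finset.sum_filter, Finset.filter_filter] at h1
  have hset : (univ.filter (fun S : Finset V => v0 ∈ S ∧ Fintype.card V - S.card ≤ 1)) =
      insert univ ((univ.erase v0).image (fun w => univ.erase w)) := by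
    ext S
    simp only [Finset.mem_filter, Finset.mem_univ, true_and, Finset.mem_insert,
      Finset.mem_image, Finset.mem_erase]
    constructor
    · rintro ⟨h0S, hcard⟩
      have hle : S.card ≤ Fintype.card V := by
        simpa using Finset.card_le_card (Finset.subset_univ S)
      rcases Nat.lt_or_ge S.card (Fintype.card V) with hlt | hge
      · right
        have hcompl : Sᶜ.card = 1 := by
          rw [Finset.card_compl]
          omega
        obtain ⟨w, hw⟩ := Finset.card_eq_one.mp hcompl
        refine ⟨w, ⟨?_, trivial⟩, ?_⟩
        · intro hw0
          subst hw0
          have : w ∈ Sᶜ := by rw [hw]; exact Finset.mem_singleton_self w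
          rw [Finset.mem_compl] at this
          exact this h0S
        · have : S = ({w} : Finset V)ᶜ := by
            rw [← hw, compl_compl]
          rw [this, Finset.compl_singleton]
      · left
        exact Finset.eq_univ_of_card S (le_antisymm hle hge)
    · rintro (rfl | ⟨w, ⟨hw0, -⟩, rfl⟩)
      · refine ⟨Finset.mem_univ _, ?_⟩
        rw [Finset.card_univ]
        omega
      · refine ⟨Finset.mem_erase.mpr ⟨Ne.symm hw0, Finset.mem_univ _⟩, ?_⟩
        rw [Finset.card_erase_of_mem (Finset.mem_univ _), Finset.card_univ]
        omega
  rw [hset, Finset.sum_insert, Finset.sum_image] at h1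
  · rw [Finset.card_univ] at h1
    have hconst : ∀ w ∈ univ.erase v0,
        f ((univ.erase w).card) = f (Fintype.card V - 1) := by
      intro w _
      rw [Finset.card_erase_of_mem (Finset.mem_univ _), Finset.card_univ]
    rw [Finset.sum_congr rfl hconst, Finset.sum_const,
      Finset.card_erase_of_mem (Finset.mem_univ _), Finset.card_univ, nsmul_eq_mul] at h1
    have hcast : ((Fintype.card V - 1 : ℕ) : ℤ) = (Fintype.card V : ℤ) - 1 := by
      omega
    rw [hcast] at h1
    linarith
  · intro w hw x hx hwx
    by_contra hne
    have : x ∈ univ.erase w := Finset.mem_erase.mpr ⟨fun h => hne h.symm, Finset.mem_univ _⟩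
    rw [show univ.erase w = univ.erase x from hwx] at this
    exact (Finset.mem_erase.mp this).1 rfl
  · intro hmem
    rw [Finset.mem_image] at hmem
    obtain ⟨w, _, hw⟩ := hmem
    have : w ∈ (univ : Finset V) := Finset.mem_univ w
    rw [← hw] at this
    exact (Finset.mem_erase.mp this).1 rfl

lemma f_formula : ∀ n : ℕ, f (n + 1) = (-1 : ℤ) ^ n * (Nat.factorial n) := by
  intro n
  induction n with
  | zero => simpa using f_one
  | succ m ih =>
    have hrec := rec_general (Fin (m + 2)) 0 (by simp)
    rw [Fintype.card_fin] at hrec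
    have hm : m + 2 - 1 = m + 1 := rfl
    rw [hm] at hrec
    have : f (m + 2) = -((m : ℤ) + 2 - 1) * f (m + 1) := by push_cast at hrec; linarith
    rw [this, ih, Nat.factorial_succ]
    push_cast
    ring

end ConnSum

open scoped Classical in
/-- The sum of `(-1)^{e(G)}` over all connected simple graphs `G` on `n ≥ 1` labeled vertices
equals `(-1)^{n-1} (n-1)!`. -/
theorem sum_connected_graphs_neg_one_pow_edges (n : ℕ) (hn : 1 ≤ n) :
    ∑ G ∈ Finset.univ.filter (fun G : SimpleGraph (Fin n) => G.Connected),
        ((-1 : ℤ)) ^ (Nat.card G.edgeSet) =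
      (-1 : ℤ) ^ (n - 1) * (Nat.factorial (n - 1)) := by
  obtain ⟨m, rfl⟩ : ∃ m, n = m + 1 := ⟨n - 1, (Nat.succ_pred_eq_of_pos hn).symm⟩
  have := ConnSum.f_formula m
  simpa [ConnSum.f, ConnSum.E] using this
end

section
/- For each fixed m ≥ 1, the generating function sum over n ≥ 0 of f_m(n) q^n equals the sum over all set partitions C = {C_1,...,C_r} of {1,...,m} of the product over blocks C_j of poids(C_j), where poids({s}) = 1/(1-q^s) and for a block of size d > 1 with elements s_1,...,s_d, poids = (-1)^{d-1} (d-1)! q^{s_1+...+s_d}/(1 - q^{s_1+...+s_d}). -/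
open scoped Classical

/-- A partition has pairwise distinct (nonzero) multiplicities. -/
def distinctMult {n : ℕ} (P : n.Partition) : Prop :=
  ∀ i ∈ P.parts, ∀ j ∈ P.parts, i ≠ j → P.parts.count i ≠ P.parts.count j

/-- `fm m n` : the number of partitions of `n` with all parts at most `m` and all nonzero
multiplicities pairwise distinct. -/
noncomputable def fm (m n : ℕ) : ℕ :=
  Nat.card {P : n.Partition // (∀ x ∈ P.parts, x ≤ m) ∧ distinctMult P}

/-- `C` is a set partition of `{1,…,m}` (encoded as `Fin m`, with `i : Fin m`
standing for the part `i+1`). -/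
def IsSetPartition (m : ℕ) (C : Finset (Finset (Fin m))) : Prop :=
  (∀ B ∈ C, B.Nonempty) ∧
  (∀ B₁ ∈ C, ∀ B₂ ∈ C, B₁ ≠ B₂ → Disjoint B₁ B₂) ∧
  (∀ x : Fin m, ∃ B ∈ C, x ∈ B)

/-- The weight `poids` of a block `B ⊆ {1,…,m}`:
`1/(1-q^s)` for a singleton `{s}` and
`(-1)^{d-1}(d-1)! q^{s₁+⋯+s_d}/(1-q^{s₁+⋯+s_d})` for a block of size `d > 1`. -/
noncomputable def poids {m : ℕ} (B : Finset (Fin m)) : PowerSeries ℚ :=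
  if B.card = 1 then
    (1 - PowerSeries.X ^ (∑ s ∈ B, ((s : ℕ) + 1)))⁻¹
  else
    ((-1 : ℚ) ^ (B.card - 1) * (Nat.factorial (B.card - 1) : ℚ)) •
      (PowerSeries.X ^ (∑ s ∈ B, ((s : ℕ) + 1)) *
        (1 - PowerSeries.X ^ (∑ s ∈ B, ((s : ℕ) + 1)))⁻¹)

open Finset PowerSeries

/-- weight of a block of size `d` -/
noncomputable def ww (d : ℕ) : ℚ := (-1 : ℚ) ^ (d - 1) * (Nat.factorial (d - 1) : ℚ)

lemma ww_one : ww 1 = 1 := by simp [ww]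

lemma ww_rec (ℓ : ℕ) (hℓ : 2 ≤ ℓ) : ww ℓ + ((ℓ - 1 : ℕ) : ℚ) * ww (ℓ - 1) = 0 := by
  obtain ⟨k, rfl⟩ : ∃ k, ℓ = k + 2 := ⟨ℓ - 2, by omega⟩
  have h1 : k + 2 - 1 = k + 1 := by omega
  have h2 : k + 1 - 1 = k := by omega
  simp only [ww, h1, h2, Nat.factorial_succ, pow_succ]
  push_cast
  ring

lemma geom_inv (S : ℕ) (hS : 0 < S) :
    ((1 - X ^ S : PowerSeries ℚ))⁻¹ = mk fun t => if S ∣ t then 1 else 0 := by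
  have hc : constantCoeff (1 - X ^ S : PowerSeries ℚ) ≠ 0 := by
    rw [← coeff_zero_eq_constantCoeff]
    simp [coeff_X_pow, hS.ne']
  rw [PowerSeries.inv_eq_iff_mul_eq_one hc]
  ext t
  rw [mul_sub, mul_one, mul_comm, map_sub, coeff_X_pow_mul', coeff_mk, coeff_one]
  simp only [coeff_mk]
  rcases Nat.eq_zero_or_pos t with rfl | ht
  · have : ¬ S ≤ 0 := by omega
    simp [this, Nat.dvd_zero]
  · by_cases hdvd : S ∣ t
    · have h1 : S ≤ t := Nat.le_of_dvd ht hdvd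
      have h2 : S ∣ t - S := (Nat.dvd_sub hdvd dvd_rfl)
      simp [hdvd, h1, h2, ht.ne']
    · have h2 : ¬ (S ≤ t) ∨ ¬ S ∣ t - S := by
        by_cases hle : S ≤ t
        · exact Or.inr fun h => hdvd
            (by have := Nat.dvd_add h (dvd_refl S); rwa [Nat.sub_add_cancel hle] at this)
        · exact Or.inl hle
      rcases h2 with h2 | h2 <;> simp [hdvd, h2, ht.ne']

lemma sum_parts_pos {m : ℕ} (B : Finset (Fin m)) (hB : B.Nonempty) :
    0 < ∑ s ∈ B, ((s : ℕ) + 1) :=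
  Finset.sum_pos (fun s _ => Nat.succ_pos _) hB

lemma coeff_poids {m : ℕ} (B : Finset (Fin m)) (hB : B.Nonempty) (t : ℕ) :
    coeff t (poids B) =
      if (∑ s ∈ B, ((s : ℕ) + 1)) ∣ t ∧ (B.card = 1 ∨ t ≠ 0) then ww B.card else 0 := by
  set S := ∑ s ∈ B, ((s : ℕ) + 1) with hSdef
  have hS : 0 < S := sum_parts_pos B hB
  unfold poids
  by_cases h1 : B.card = 1
  · rw [if_pos h1, geom_inv S hS, coeff_mk, h1, ww_one]
    by_cases hdvd : S ∣ t <;> simp [hdvd, h1]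
  · rw [if_neg h1, geom_inv S hS, map_smul, smul_eq_mul, coeff_X_pow_mul', ]
    simp only [coeff_mk]
    by_cases hle : S ≤ t
    · have ht : t ≠ 0 := by omega
      by_cases hdvd : S ∣ t
      · have h2 : S ∣ t - S := Nat.dvd_sub hdvd dvd_rfl
        simp [← hSdef, hle, h2, hdvd, ht, ww]
      · have h2 : ¬ S ∣ t - S := by
          intro h
          exact hdvd (by have := Nat.dvd_add h (dvd_refl S); rwa [Nat.sub_add_cancel hle] at this)
        simp [← hSdef, hle, h2, hdvd, h1]
    · have : ¬ (S ∣ t ∧ (B.card = 1 ∨ t ≠ 0)) := by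
        rintro ⟨hd, h⟩
        rcases h with h | h
        · exact h1 h
        · exact hle (Nat.le_of_dvd (by omega) hd)
      simp [← hSdef, hle, this]

section SetPartitions

variable {α : Type*} [Fintype α] [DecidableEq α]

/-- `C` is a set partition of the finset `K`. -/
def isPart (K : Finset α) (C : Finset (Finset α)) : Prop :=
  (∀ B ∈ C, B.Nonempty) ∧ (∀ B ∈ C, B ⊆ K) ∧
  (∀ B₁ ∈ C, ∀ B₂ ∈ C, B₁ ≠ B₂ → Disjoint B₁ B₂) ∧ (∀ x ∈ K, ∃ B ∈ C, x ∈ B)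

lemma existsUnique_block {K : Finset α} {C : Finset (Finset α)} (h : isPart K C) {x : α}
    (hx : x ∈ K) : ∃! B, B ∈ C ∧ x ∈ B := by
  obtain ⟨B, hB, hxB⟩ := h.2.2.2 x hx
  refine ⟨B, ⟨hB, hxB⟩, ?_⟩
  rintro B' ⟨hB', hxB'⟩
  by_contra hne
  exact (Finset.disjoint_left.1 (h.2.2.1 B' hB' B hB hne)) hxB' hxB

/-- The block of the set partition `C` of `K` containing `x`. -/
noncomputable def blockOf (K : Finset α) (C : Finset (Finset α)) (h : isPart K C) (x : α) :
    Finset α :=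
  if hx : x ∈ K then C.choose (x ∈ ·) (existsUnique_block h hx) else ∅

lemma blockOf_mem {K : Finset α} {C : Finset (Finset α)} (h : isPart K C) {x : α} (hx : x ∈ K) :
    blockOf K C h x ∈ C := by
  rw [blockOf, dif_pos hx]; exact Finset.choose_mem _ _ _

lemma mem_blockOf {K : Finset α} {C : Finset (Finset α)} (h : isPart K C) {x : α} (hx : x ∈ K) :
    x ∈ blockOf K C h x := by
  rw [blockOf, dif_pos hx]; exact (Finset.choose_spec (x ∈ ·) C (existsUnique_block h hx)).2

lemma blockOf_eq {K : Finset α} {C : Finset (Finset α)} (h : isPart K C) {x : α} (hx : x ∈ K)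
    {B : Finset α} (hB : B ∈ C) (hxB : x ∈ B) : blockOf K C h x = B := by
  by_contra hne
  exact (Finset.disjoint_left.1 (h.2.2.1 _ (blockOf_mem h hx) B hB hne)) (mem_blockOf h hx) hxB

lemma isPart_empty_iff {C : Finset (Finset α)} : isPart (∅ : Finset α) C ↔ C = ∅ := by
  constructor
  · rintro ⟨h1, h2, _, _⟩
    rw [Finset.eq_empty_iff_forall_notMem]
    intro B hB
    obtain ⟨y, hy⟩ := h1 B hB
    exact absurd (h2 B hB hy) (Finset.notMem_empty y)
  · rintro rfl
    exact ⟨by simp, by simp, by simp, by simp⟩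

lemma isPart_erase {K : Finset α} {C : Finset (Finset α)} (h : isPart K C) {B : Finset α}
    (hB : B ∈ C) : isPart (K \ B) (C.erase B) := by
  obtain ⟨h1, h2, h3, h4⟩ := h
  refine ⟨fun B' hB' => h1 B' (Finset.mem_of_mem_erase hB'),
    fun B' hB' => ?_, fun B₁ h₁ B₂ h₂ hne => h3 B₁ (Finset.mem_of_mem_erase h₁) B₂
      (Finset.mem_of_mem_erase h₂) hne, fun y hy => ?_⟩
  · obtain ⟨hne, hB'C⟩ := Finset.mem_erase.1 hB'
    intro y hy
    rw [Finset.mem_sdiff]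
    exact ⟨h2 B' hB'C hy, fun hyB => Finset.disjoint_left.1 (h3 B' hB'C B hB hne) hy hyB⟩
  · rw [Finset.mem_sdiff] at hy
    obtain ⟨B', hB', hyB'⟩ := h4 y hy.1
    refine ⟨B', Finset.mem_erase.2 ⟨?_, hB'⟩, hyB'⟩
    rintro rfl
    exact hy.2 hyB'

lemma isPart_insert {K B : Finset α} {C : Finset (Finset α)} (h : isPart (K \ B) C)
    (hBK : B ⊆ K) (hBne : B.Nonempty) : isPart K (insert B C) := by
  obtain ⟨h1, h2, h3, h4⟩ := h
  have hdisj : ∀ B' ∈ C, Disjoint B B' := by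
    intro B' hB'
    exact Finset.disjoint_left.2 fun y hyB hyB' =>
      (Finset.mem_sdiff.1 (h2 B' hB' hyB')).2 hyB
  refine ⟨?_, ?_, ?_, ?_⟩
  · intro B' hB'
    rcases Finset.mem_insert.1 hB' with rfl | hB'
    · exact hBne
    · exact h1 B' hB'
  · intro B' hB'
    rcases Finset.mem_insert.1 hB' with rfl | hB'
    · exact hBK
    · exact (h2 B' hB').trans (Finset.sdiff_subset)
  · intro B₁ h₁ B₂ h₂ hne
    rcases Finset.mem_insert.1 h₁ with rfl | h₁'
    · rcases Finset.mem_insert.1 h₂ with rfl | h₂'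
      · exact absurd rfl hne
      · exact hdisj B₂ h₂'
    · rcases Finset.mem_insert.1 h₂ with rfl | h₂'
      · exact (hdisj B₁ h₁').symm
      · exact h3 B₁ h₁' B₂ h₂' hne
  · intro y hy
    by_cases hyB : y ∈ B
    · exact ⟨B, Finset.mem_insert_self _ _, hyB⟩
    · obtain ⟨B', hB', hyB'⟩ := h4 y (Finset.mem_sdiff.2 ⟨hy, hyB⟩)
      exact ⟨B', Finset.mem_insert_of_mem hB', hyB'⟩

/-- Recursion for sums over set partitions: split off the block containing `x`. -/
lemma SPF_recursion (W : Finset α → ℚ) (K : Finset α) (x : α) (hx : x ∈ K) :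
    ∑ C ∈ Finset.univ.filter (isPart K), ∏ B ∈ C, W B
      = ∑ B ∈ K.powerset.filter (fun B => x ∈ B),
          W B * ∑ C ∈ Finset.univ.filter (isPart (K \ B)), ∏ B' ∈ C, W B' := by
  simp only [Finset.mul_sum]
  rw [Finset.sum_sigma']
  refine Finset.sum_bij' (i := fun C hC => ?_) (j := fun p hp => insert p.1 p.2) ?_ ?_ ?_ ?_ ?_
  · -- forward map
    exact ⟨blockOf K C (by simpa using (Finset.mem_filter.1 hC).2) x,
      C.erase (blockOf K C (by simpa using (Finset.mem_filter.1 hC).2) x)⟩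
  · -- forward map lands in target
    intro C hC
    have h : isPart K C := (Finset.mem_filter.1 hC).2
    rw [Finset.mem_sigma]
    constructor
    · rw [Finset.mem_filter, Finset.mem_powerset]
      exact ⟨h.2.1 _ (blockOf_mem h hx), mem_blockOf h hx⟩
    · rw [Finset.mem_filter]
      exact ⟨Finset.mem_univ _, isPart_erase h (blockOf_mem h hx)⟩
  · -- backward map lands in source
    rintro ⟨B, C⟩ hp
    rw [Finset.mem_sigma, Finset.mem_filter, Finset.mem_powerset, Finset.mem_filter] at hp
    rw [Finset.mem_filter]
    exact ⟨Finset.mem_univ _, isPart_insert hp.2.2 hp.1.1 ⟨x, hp.1.2⟩⟩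
  · -- left inverse
    intro C hC
    have h : isPart K C := (Finset.mem_filter.1 hC).2
    exact Finset.insert_erase (blockOf_mem h hx)
  · -- right inverse
    rintro ⟨B, C⟩ hp
    rw [Finset.mem_sigma, Finset.mem_filter, Finset.mem_powerset, Finset.mem_filter] at hp
    have hBC : B ∉ C := by
      intro hBC
      have hsub := hp.2.2.2.1 B hBC
      obtain ⟨y, hy⟩ : B.Nonempty := ⟨x, hp.1.2⟩
      exact (Finset.mem_sdiff.1 (hsub hy)).2 hy
    have hpart : isPart K (insert B C) := isPart_insert hp.2.2 hp.1.1 ⟨x, hp.1.2⟩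
    have hBeq : blockOf K (insert B C) (by simpa using hpart) x = B :=
      blockOf_eq hpart hx (Finset.mem_insert_self _ _) hp.1.2
    have h2 : (insert B C).erase (blockOf K (insert B C) hpart x) = C := by
      rw [hBeq]; exact Finset.erase_insert hBC
    exact Sigma.ext (by simpa using hBeq) (heq_of_eq h2)
  · -- summand equality
    intro C hC
    have h : isPart K C := (Finset.mem_filter.1 hC).2
    exact (Finset.mul_prod_erase C W (blockOf_mem h hx)).symm

end SetPartitions

section T2

variable {α : Type*} [Fintype α] [DecidableEq α]

/-- Weight of a block `B` relative to a multiplicity function `a`. -/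
noncomputable def cw (a : α → ℕ) (B : Finset α) : ℚ :=
  if B.card = 1 ∨ (∃ v, 1 ≤ v ∧ ∀ y ∈ B, a y = v) then ww B.card else 0

/-- `a` has pairwise distinct nonzero values on `K`. -/
def InjP (a : α → ℕ) (K : Finset α) : Prop :=
  ∀ y ∈ K, ∀ z ∈ K, y ≠ z → a y ≠ 0 → a y ≠ a z

lemma InjP_mono {a : α → ℕ} {K K' : Finset α} (h : InjP a K) (hsub : K' ⊆ K) : InjP a K' :=
  fun y hy z hz => h y (hsub hy) z (hsub hz)

lemma InjP_sdiff_singleton_zero {a : α → ℕ} {K : Finset α} {x : α} (hax : a x = 0) :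
    InjP a (K \ {x}) ↔ InjP a K := by
  constructor
  · intro h y hy z hz hne hay
    by_cases hyx : y = x
    · exact absurd (hyx ▸ hax) hay
    · by_cases hzx : z = x
      · rw [hzx, hax]; exact hay
      · exact h y (Finset.mem_sdiff.2 ⟨hy, by simp [hyx]⟩)
          z (Finset.mem_sdiff.2 ⟨hz, by simp [hzx]⟩) hne hay
  · intro h
    exact InjP_mono h (Finset.sdiff_subset)

lemma InjP_sdiff_iff {a : α → ℕ} {K B : Finset α} {x : α} (hax : a x ≠ 0)
    (hB : B ⊆ K.filter (fun y => a y = a x)) :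
    InjP a (K \ B) ↔ (InjP a (K \ K.filter (fun y => a y = a x)) ∧
      ((K.filter (fun y => a y = a x)) \ B).card ≤ 1) := by
  set L := K.filter (fun y => a y = a x) with hL
  constructor
  · intro h
    constructor
    · exact InjP_mono h (Finset.sdiff_subset_sdiff (le_refl K) hB)
    · rw [Finset.card_le_one]
      intro y hy z hz
      rw [Finset.mem_sdiff] at hy hz
      have hyL := Finset.mem_filter.1 hy.1
      have hzL := Finset.mem_filter.1 hz.1
      by_contra hne
      exact h y (Finset.mem_sdiff.2 ⟨hyL.1, hy.2⟩) z (Finset.mem_sdiff.2 ⟨hzL.1, hz.2⟩) hne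
        (hyL.2 ▸ hax) (by rw [hyL.2, hzL.2])
  · rintro ⟨h1, h2⟩ y hy z hz hne hay heq
    rw [Finset.mem_sdiff] at hy hz
    by_cases hyv : a y = a x
    · have hzv : a z = a x := heq ▸ hyv
      have hyL : y ∈ L \ B := Finset.mem_sdiff.2 ⟨Finset.mem_filter.2 ⟨hy.1, hyv⟩, hy.2⟩
      have hzL : z ∈ L \ B := Finset.mem_sdiff.2 ⟨Finset.mem_filter.2 ⟨hz.1, hzv⟩, hz.2⟩
      exact hne (Finset.card_le_one.1 h2 y hyL z hzL)
    · have hzv : a z ≠ a x := fun hc => hyv (heq ▸ hc)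
      exact h1 y (Finset.mem_sdiff.2 ⟨hy.1, fun hc => hyv (Finset.mem_filter.1 hc).2⟩)
        z (Finset.mem_sdiff.2 ⟨hz.1, fun hc => hzv (Finset.mem_filter.1 hc).2⟩) hne hay heq

theorem T2 (a : α → ℕ) (K : Finset α) :
    ∑ C ∈ Finset.univ.filter (isPart K), ∏ B ∈ C, cw a B
      = if InjP a K then 1 else 0 := by
  induction K using Finset.strongInduction with
  | _ K ih =>
  rcases Finset.eq_empty_or_nonempty K with rfl | ⟨x, hx⟩
  · have hfil : Finset.univ.filter (isPart (∅ : Finset α)) = {(∅ : Finset (Finset α))} := by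
      ext C; simp [isPart_empty_iff]
    rw [hfil]
    simp [InjP]
  · rw [SPF_recursion (cw a) K x hx]
    have hIH : ∀ B ∈ K.powerset.filter (fun B => x ∈ B),
        (∑ C ∈ Finset.univ.filter (isPart (K \ B)), ∏ B' ∈ C, cw a B')
          = if InjP a (K \ B) then 1 else 0 := by
      intro B hB
      rw [Finset.mem_filter, Finset.mem_powerset] at hB
      exact ih (K \ B) (Finset.sdiff_ssubset hB.1 ⟨x, hB.2⟩)
    rw [Finset.sum_congr rfl (fun B hB => by rw [hIH B hB])]
    by_cases hax : a x = 0
    · -- only B = {x} contributes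
      rw [Finset.sum_eq_single_of_mem {x}
        (by rw [Finset.mem_filter, Finset.mem_powerset]
            exact ⟨Finset.singleton_subset_iff.2 hx, Finset.mem_singleton_self x⟩)]
      · have hcw : cw a {x} = 1 := by simp [cw, ww_one]
        rw [hcw, one_mul, InjP_sdiff_singleton_zero hax]
      · intro B hB hne
        rw [Finset.mem_filter, Finset.mem_powerset] at hB
        have hcw : cw a B = 0 := by
          rw [cw, if_neg]
          push_neg
          constructor
          · intro hcard
            exfalso
            obtain ⟨y, hy⟩ := Finset.card_eq_one.1 hcard
            have hyx : y = x := by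
              have h2 := hB.2; rw [hy, Finset.mem_singleton] at h2; exact h2.symm
            exact hne (by rw [hy, hyx])
          · intro v hv
            exact ⟨x, hB.2, by rw [hax]; omega⟩
        rw [hcw, zero_mul]
    · -- a x = v ≥ 1
      set L := K.filter (fun y => a y = a x) with hLdef
      have hxL : x ∈ L := Finset.mem_filter.2 ⟨hx, rfl⟩
      have hLK : L ⊆ K := Finset.filter_subset _ _
      -- restrict the sum to subsets of L
      rw [← Finset.sum_subset (s₁ := L.powerset.filter (fun B => x ∈ B))
        (by intro B hB
            rw [Finset.mem_filter, Finset.mem_powerset] at hB ⊢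
            exact ⟨hB.1.trans hLK, hB.2⟩)
        (by intro B hB hBnot
            rw [Finset.mem_filter, Finset.mem_powerset] at hB hBnot
            push_neg at hBnot
            have hBnL : ¬ B ⊆ L := fun hc => absurd hB.2 (by intro h; exact (hBnot hc) h)
            have hcw : cw a B = 0 := by
              rw [cw, if_neg]
              push_neg
              constructor
              · intro hcard
                obtain ⟨y, hy⟩ := Finset.card_eq_one.1 hcard
                have : y = x := by
                  have := hB.2; rw [hy] at this; exact (Finset.mem_singleton.1 this).symm
                rw [hy, this] at hBnL
                exact hBnL (Finset.singleton_subset_iff.2 hxL)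
              · intro v hv
                by_contra hcon
                push_neg at hcon
                have hvx : v = a x := by rw [← hcon x hB.2]
                exact hBnL (fun y hy => Finset.mem_filter.2 ⟨hB.1 hy, (hcon y hy).trans hvx⟩)
            rw [hcw, zero_mul])]
      -- on subsets of L the weight is ww |B|, and the indicator factors
      have hstep : ∀ B ∈ L.powerset.filter (fun B => x ∈ B),
          cw a B * (if InjP a (K \ B) then 1 else 0)
            = (if InjP a (K \ L) then 1 else 0) *
                (if (L \ B).card ≤ 1 then ww B.card else 0) := by
        intro B hB
        rw [Finset.mem_filter, Finset.mem_powerset] at hB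
        have hcw : cw a B = ww B.card := by
          rw [cw, if_pos]
          by_cases hcard : B.card = 1
          · exact Or.inl hcard
          · exact Or.inr ⟨a x, by omega, fun y hy => (Finset.mem_filter.1 (hB.1 hy)).2⟩
        rw [hcw, InjP_sdiff_iff hax hB.1]
        by_cases h1 : InjP a (K \ L) <;> by_cases h2 : (L \ B).card ≤ 1 <;>
          simp [h1, h2, ← hLdef]
      rw [Finset.sum_congr rfl hstep, ← Finset.mul_sum]
      -- compute the remaining sum
      have hKiff : InjP a K ↔ (InjP a (K \ L) ∧ L.card ≤ 1) := by
        have := InjP_sdiff_iff (a := a) (K := K) (x := x) hax (B := ∅) (Finset.empty_subset _)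
        rw [Finset.sdiff_empty, Finset.sdiff_empty] at this
        exact this
      by_cases h1 : InjP a (K \ L)
      · rw [if_pos h1, one_mul]
        -- sum over B ⊆ L, x ∈ B, |L \ B| ≤ 1
        have hset : (L.powerset.filter (fun B => x ∈ B)).filter (fun B => (L \ B).card ≤ 1)
            = insert L ((L.erase x).image (fun y => L.erase y)) := by
          ext B
          simp only [Finset.mem_filter, Finset.mem_powerset, Finset.mem_insert,
            Finset.mem_image, Finset.mem_erase]
          constructor
          · rintro ⟨⟨hBL, hxB⟩, hcard⟩
            have hcard' : L.card - B.card ≤ 1 := by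
              rw [← Finset.card_sdiff_of_subset hBL]; exact hcard
            have hBle := Finset.card_le_card hBL
            by_cases heq : B.card = L.card
            · exact Or.inl (Finset.eq_of_subset_of_card_le hBL (le_of_eq heq.symm))
            · have hlt : B.card = L.card - 1 := by omega
              obtain ⟨y, hy⟩ := Finset.card_eq_one.1 (show (L \ B).card = 1 by
                rw [Finset.card_sdiff_of_subset hBL]; omega)
              have hyL : y ∈ L ∧ y ∉ B := by
                have : y ∈ L \ B := hy ▸ Finset.mem_singleton_self y
                exact Finset.mem_sdiff.1 this
              refine Or.inr ⟨y, ⟨fun hyx => hyL.2 (hyx ▸ hxB), hyL.1⟩, ?_⟩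
              apply (Finset.eq_of_subset_of_card_le ?_ ?_).symm
              · intro z hz
                rw [Finset.mem_erase]
                exact ⟨fun hzy => hyL.2 (hzy ▸ hz), hBL hz⟩
              · rw [Finset.card_erase_of_mem hyL.1]; omega
          · rintro (rfl | ⟨y, ⟨hyx, hyL⟩, rfl⟩)
            · exact ⟨⟨le_refl _, hxL⟩, by simp⟩
            · refine ⟨⟨Finset.erase_subset _ _, Finset.mem_erase.2 ⟨fun h => hyx h.symm, hxL⟩⟩, ?_⟩
              have : L \ L.erase y = {y} := by
                ext z
                simp only [Finset.mem_sdiff, Finset.mem_erase, Finset.mem_singleton]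
                constructor
                · rintro ⟨hz, hz2⟩
                  by_contra hzy
                  exact hz2 ⟨hzy, hz⟩
                · rintro rfl; exact ⟨hyL, fun h => h.1 rfl⟩
              rw [this]; simp
        rw [← Finset.sum_filter, hset]
        have hLnotmem : L ∉ (L.erase x).image (fun y => L.erase y) := by
          rw [Finset.mem_image]
          rintro ⟨y, hy, hc⟩
          have hyL : y ∈ L := Finset.mem_of_mem_erase hy
          have : y ∉ L.erase y := Finset.notMem_erase y L
          rw [hc] at this
          exact this hyL
        rw [Finset.sum_insert hLnotmem, Finset.sum_image (by
          intro y hy z hz hc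
          by_contra hne
          have : y ∈ L.erase z := Finset.mem_erase.2 ⟨hne, Finset.mem_of_mem_erase hy⟩
          rw [← (show L.erase y = L.erase z from hc)] at this
          exact (Finset.notMem_erase y L) this)]
        have hcardL : 1 ≤ L.card := Finset.card_pos.2 ⟨x, hxL⟩
        have herase : ∀ y ∈ L.erase x, ww ((L.erase y).card) = ww (L.card - 1) := by
          intro y hy
          rw [Finset.card_erase_of_mem (Finset.mem_of_mem_erase hy)]
        rw [Finset.sum_congr rfl herase, Finset.sum_const, Finset.card_erase_of_mem hxL,
          nsmul_eq_mul]
        by_cases hL1 : L.card = 1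
        · rw [hL1]
          have : InjP a K := hKiff.2 ⟨h1, le_of_eq hL1⟩
          simp [this, ww_one]
        · have hL2 : 2 ≤ L.card := by omega
          have : ¬ InjP a K := fun hc => by
            have := (hKiff.1 hc).2; omega
          rw [if_neg this]
          have := ww_rec L.card hL2
          push_cast
          push_cast at this
          linarith
      · rw [if_neg h1, zero_mul, if_neg (fun hc => h1 (hKiff.1 hc).1)]

end T2

section CoeffC

/-- weighted sum of a multiplicity function -/
def wsum {m : ℕ} (a : Fin m → ℕ) : ℕ := ∑ i : Fin m, ((i : ℕ) + 1) * a i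

lemma prodIteZero {β : Type*} (s : Finset β) (p : β → Prop) [DecidablePred p] (f : β → ℚ) :
    (∏ b ∈ s, if p b then f b else 0) = if (∀ b ∈ s, p b) then ∏ b ∈ s, f b else 0 := by
  split_ifs with h
  · exact Finset.prod_congr rfl fun b hb => if_pos (h b hb)
  · push_neg at h
    obtain ⟨b, hb, hp⟩ := h
    exact Finset.prod_eq_zero hb (if_neg hp)

variable {m : ℕ}

lemma coeff_prod_poids {n : ℕ} {C : Finset (Finset (Fin m))} (hC : isPart Finset.univ C) :
    (PowerSeries.coeff n) (∏ B ∈ C, poids B)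
      = ∑ a ∈ Fintype.piFinset (fun _ : Fin m => Finset.range (n + 1)),
          if wsum a = n then ∏ B ∈ C, cw a B else 0 := by
  have hdisj : (↑C : Set (Finset (Fin m))).PairwiseDisjoint id := by
    intro B₁ h₁ B₂ h₂ hne
    exact hC.2.2.1 B₁ (Finset.mem_coe.1 h₁) B₂ (Finset.mem_coe.1 h₂) hne
  have hunion : (Finset.univ : Finset (Fin m)) = C.biUnion id := by
    ext y
    simp only [Finset.mem_univ, true_iff, Finset.mem_biUnion, id]
    exact hC.2.2.2 y (Finset.mem_univ y)
  have hsum : ∀ g : Fin m → ℕ, ∑ y : Fin m, g y = ∑ B ∈ C, ∑ y ∈ B, g y := by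
    intro g
    rw [show (Finset.univ : Finset (Fin m)) = C.biUnion id from hunion,
      Finset.sum_biUnion hdisj]
    simp only [id_eq]
  have hSpos : ∀ B ∈ C, 0 < ∑ s ∈ B, ((s : ℕ) + 1) := fun B hB => sum_parts_pos B (hC.1 B hB)
  rw [PowerSeries.coeff_prod]
  have hL : ∀ l ∈ Finset.finsuppAntidiag C n,
      (∏ B ∈ C, (PowerSeries.coeff (l B)) (poids B))
        = if (∀ B ∈ C, (∑ s ∈ B, ((s : ℕ) + 1)) ∣ l B ∧ (B.card = 1 ∨ l B ≠ 0))
            then ∏ B ∈ C, ww B.card else 0 := by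
    intro l _
    split_ifs with h
    · exact Finset.prod_congr rfl fun B hB => by
        rw [coeff_poids B (hC.1 B hB) (l B), if_pos (h B hB)]
    · obtain ⟨B, hB⟩ := not_forall.1 h
      obtain ⟨hBmem, hp⟩ := _root_.not_imp.1 hB
      refine Finset.prod_eq_zero hBmem ?_
      rw [coeff_poids B (hC.1 B hBmem) (l B), if_neg hp]
  rw [Finset.sum_congr rfl hL]
  have hR : ∀ a ∈ Fintype.piFinset (fun _ : Fin m => Finset.range (n + 1)),
      (if wsum a = n then ∏ B ∈ C, cw a B else 0)
        = if (wsum a = n ∧ ∀ B ∈ C, (B.card = 1 ∨ ∃ v, 1 ≤ v ∧ ∀ y ∈ B, a y = v))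
            then ∏ B ∈ C, ww B.card else 0 := by
    intro a _
    split_ifs with h1 h2 h3
    · exact Finset.prod_congr rfl fun B hB => by
        unfold cw; rw [if_pos (h2.2 B hB)]
    · have h4 : ¬ ∀ B ∈ C, (B.card = 1 ∨ ∃ v, 1 ≤ v ∧ ∀ y ∈ B, a y = v) :=
        fun hc => h2 ⟨h1, hc⟩
      obtain ⟨B, hB⟩ := not_forall.1 h4
      obtain ⟨hBmem, hp⟩ := _root_.not_imp.1 hB
      refine Finset.prod_eq_zero hBmem ?_
      unfold cw; rw [if_neg hp]
    · exact absurd h3.1 h1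
    · rfl
  rw [Finset.sum_congr rfl hR, ← Finset.sum_filter, ← Finset.sum_filter]
  refine Finset.sum_bij'
    (i := fun l _ => fun y : Fin m =>
      l (blockOf Finset.univ C hC y) / (∑ s ∈ blockOf Finset.univ C hC y, ((s : ℕ) + 1)))
    (j := fun a _ => Finsupp.onFinset C
      (fun B => if h : B ∈ C then (∑ s ∈ B, ((s : ℕ) + 1)) * a (B.min' (hC.1 B h)) else 0)
      (fun B hB => by
        by_cases h : B ∈ C
        · exact h
        · exfalso; exact hB (by simp [h])))
    ?hi ?hj ?left ?right ?heq
  case hi =>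
    intro l hl
    simp only [Finset.mem_filter, Finset.mem_finsuppAntidiag] at hl
    obtain ⟨⟨hlsum, hlsupp⟩, hP⟩ := hl
    simp only [Finset.mem_filter, Fintype.mem_piFinset]
    have hble : ∀ B ∈ C, l B ≤ n := by
      intro B hB
      rw [← hlsum]
      exact Finset.single_le_sum (fun _ _ => Nat.zero_le _) hB
    have hval : ∀ B ∈ C, ∀ y ∈ B,
        l (blockOf Finset.univ C hC y) / (∑ s ∈ blockOf Finset.univ C hC y, ((s : ℕ) + 1))
          = l B / (∑ s ∈ B, ((s : ℕ) + 1)) := by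
      intro B hB y hy
      rw [blockOf_eq hC (Finset.mem_univ y) hB hy]
    refine ⟨?_, ?_, ?_⟩
    · intro y
      rw [Finset.mem_range, Nat.lt_succ_iff]
      exact le_trans (Nat.div_le_self _ _)
        (hble _ (blockOf_mem hC (Finset.mem_univ y)))
    · calc wsum (fun y => l (blockOf Finset.univ C hC y)
              / (∑ s ∈ blockOf Finset.univ C hC y, ((s : ℕ) + 1)))
          = ∑ B ∈ C, ∑ y ∈ B, ((y : ℕ) + 1) *
              (l (blockOf Finset.univ C hC y)
                / (∑ s ∈ blockOf Finset.univ C hC y, ((s : ℕ) + 1))) := hsum _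
        _ = ∑ B ∈ C, l B := by
            refine Finset.sum_congr rfl fun B hB => ?_
            rw [Finset.sum_congr rfl (fun y hy => by rw [hval B hB y hy]), ← Finset.sum_mul]
            exact Nat.mul_div_cancel' (hP B hB).1
        _ = n := hlsum
    · intro B hB
      by_cases hcard : B.card = 1
      · exact Or.inl hcard
      · refine Or.inr ⟨l B / (∑ s ∈ B, ((s : ℕ) + 1)), ?_, fun y hy => hval B hB y hy⟩
        rw [Nat.one_le_div_iff (hSpos B hB)]
        refine Nat.le_of_dvd ?_ (hP B hB).1
        rcases (hP B hB).2 with h | h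
        · exact absurd h hcard
        · omega
  case hj =>
    intro a ha
    simp only [Finset.mem_filter, Fintype.mem_piFinset] at ha
    obtain ⟨_, hwsum, hQ⟩ := ha
    have hconst : ∀ B (hB : B ∈ C), ∀ y ∈ B, a y = a (B.min' (hC.1 B hB)) := by
      intro B hB y hy
      rcases hQ B hB with hcard | ⟨v, _, hv⟩
      · obtain ⟨z, hz⟩ := Finset.card_eq_one.1 hcard
        subst hz
        have h1 : y = z := Finset.mem_singleton.1 hy
        have h2 : ∀ hne, ({z} : Finset (Fin m)).min' hne = z :=
          fun hne => Finset.mem_singleton.1 (Finset.min'_mem _ _)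
        rw [h1, h2]
      · rw [hv y hy, hv _ (Finset.min'_mem B (hC.1 B hB))]
    simp only [Finset.mem_filter, Finset.mem_finsuppAntidiag]
    refine ⟨⟨?_, Finsupp.support_onFinset_subset⟩, ?_⟩
    · calc ∑ B ∈ C, (Finsupp.onFinset C
            (fun B => if h : B ∈ C then (∑ s ∈ B, ((s : ℕ) + 1)) * a (B.min' (hC.1 B h)) else 0)
            _ : Finset (Fin m) →₀ ℕ) B
          = ∑ B ∈ C, ∑ y ∈ B, ((y : ℕ) + 1) * a y := by
            refine Finset.sum_congr rfl fun B hB => ?_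
            have hconstsum : ∑ y ∈ B, ((y : ℕ) + 1) * a y
                = (∑ y ∈ B, ((y : ℕ) + 1)) * a (B.min' (hC.1 B hB)) := by
              rw [Finset.sum_mul]
              refine Finset.sum_congr rfl fun y hy => ?_
              rw [hconst B hB y hy]
            rw [Finsupp.onFinset_apply, dif_pos hB, hconstsum]
        _ = wsum a := (hsum _).symm
        _ = n := hwsum
    · intro B hB
      rw [Finsupp.onFinset_apply, dif_pos hB]
      refine ⟨dvd_mul_right _ _, ?_⟩
      by_cases hcard : B.card = 1
      · exact Or.inl hcard
      · refine Or.inr ?_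
        rcases hQ B hB with h | ⟨v, hv1, hv⟩
        · exact absurd h hcard
        · have hav : a (B.min' (hC.1 B hB)) = v := hv _ (Finset.min'_mem B (hC.1 B hB))
          have hS := hSpos B hB
          rw [hav]
          positivity
  case left =>
    intro l hl
    simp only [Finset.mem_filter, Finset.mem_finsuppAntidiag] at hl
    obtain ⟨⟨hlsum, hlsupp⟩, hP⟩ := hl
    ext B
    rw [Finsupp.onFinset_apply]
    by_cases hB : B ∈ C
    · rw [dif_pos hB]
      dsimp only
      have hy : B.min' (hC.1 B hB) ∈ B := Finset.min'_mem B (hC.1 B hB)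
      rw [blockOf_eq hC (Finset.mem_univ _) hB hy]
      exact Nat.mul_div_cancel' (hP B hB).1
    · rw [dif_neg hB]
      by_contra hne
      exact hB (hlsupp (Finsupp.mem_support_iff.2 fun hc => hne hc.symm))
  case right =>
    intro a ha
    simp only [Finset.mem_filter, Fintype.mem_piFinset] at ha
    obtain ⟨_, hwsum, hQ⟩ := ha
    funext y
    have hBmem := blockOf_mem hC (Finset.mem_univ y)
    have hymem := mem_blockOf hC (Finset.mem_univ y)
    set B := blockOf Finset.univ C hC y with hBdef
    try dsimp only
    rw [Finsupp.onFinset_apply, dif_pos hBmem,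
      Nat.mul_div_cancel_left _ (hSpos B hBmem)]
    rcases hQ B hBmem with hcard | ⟨v, _, hv⟩
    · have h2 : B.min' (hC.1 B hBmem) = y :=
        Finset.card_le_one.1 (le_of_eq hcard) _ (Finset.min'_mem B (hC.1 B hBmem)) _ hymem
      rw [h2]
    · rw [hv _ (Finset.min'_mem B (hC.1 B hBmem)), hv y hymem]
  case heq =>
    intro l _
    rfl

end CoeffC

section T3

variable {m : ℕ}

/-- the multiset of parts associated to a multiplicity function -/
def partsOf (m : ℕ) (a : Fin m → ℕ) : Multiset ℕ :=
  ∑ i : Fin m, Multiset.replicate (a i) ((i : ℕ) + 1)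

lemma count_partsOf (a : Fin m → ℕ) (i₀ : Fin m) :
    (partsOf m a).count ((i₀ : ℕ) + 1) = a i₀ := by
  rw [partsOf, Multiset.count_sum']
  rw [Finset.sum_eq_single_of_mem i₀ (Finset.mem_univ _)]
  · rw [Multiset.count_replicate, if_pos rfl]
  · intro i _ hne
    rw [Multiset.count_replicate, if_neg]
    intro h
    exact hne (Fin.ext (by omega))

lemma count_partsOf_zero (a : Fin m → ℕ) {j : ℕ} (hj : j = 0 ∨ m < j) :
    (partsOf m a).count j = 0 := by
  rw [partsOf, Multiset.count_sum']
  refine Finset.sum_eq_zero fun i _ => ?_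
  rw [Multiset.count_replicate, if_neg]
  intro h
  have := i.2
  omega

lemma mem_partsOf_pos (a : Fin m → ℕ) {x : ℕ} (hx : x ∈ partsOf m a) : 0 < x := by
  rw [partsOf, Multiset.mem_sum] at hx
  obtain ⟨i, _, hi⟩ := hx
  rw [Multiset.eq_of_mem_replicate hi]
  omega

lemma mem_partsOf_le (a : Fin m → ℕ) {x : ℕ} (hx : x ∈ partsOf m a) : x ≤ m := by
  rw [partsOf, Multiset.mem_sum] at hx
  obtain ⟨i, _, hi⟩ := hx
  rw [Multiset.eq_of_mem_replicate hi]
  have := i.2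
  omega

lemma sum_partsOf (a : Fin m → ℕ) : (partsOf m a).sum = wsum a := by
  rw [partsOf]
  rw [show (∑ i : Fin m, Multiset.replicate (a i) ((i : ℕ) + 1)).sum
      = ∑ i : Fin m, (Multiset.replicate (a i) ((i : ℕ) + 1)).sum from
    map_sum Multiset.sumAddMonoidHom _ _]
  rw [wsum]
  refine Finset.sum_congr rfl fun i _ => ?_
  rw [Multiset.sum_replicate, smul_eq_mul, mul_comm]

lemma partsOf_count_eq {n : ℕ} (P : n.Partition) (hP : ∀ x ∈ P.parts, x ≤ m) :
    partsOf m (fun i => P.parts.count ((i : ℕ) + 1)) = P.parts := by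
  ext j
  rcases Nat.eq_zero_or_pos j with rfl | hj
  · rw [count_partsOf_zero _ (Or.inl rfl), eq_comm, Multiset.count_eq_zero]
    intro hmem
    exact absurd (P.parts_pos hmem) (by omega)
  · by_cases hjm : j ≤ m
    · have : j = ((⟨j - 1, by omega⟩ : Fin m) : ℕ) + 1 := by simp; omega
      rw [this, count_partsOf]
    · rw [count_partsOf_zero _ (Or.inr (by omega)), eq_comm, Multiset.count_eq_zero]
      intro hmem
      exact hjm (hP j hmem)

lemma count_le_sum {s : Multiset ℕ} (hpos : ∀ x ∈ s, 0 < x) (j : ℕ) :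
    s.count j ≤ s.sum := by
  calc s.count j ≤ Multiset.card s := Multiset.count_le_card _ _
    _ ≤ s.sum := by
        have h1 : Multiset.card s • 1 ≤ s.sum :=
          Multiset.card_nsmul_le_sum (fun x hx => hpos x hx)
        simpa using h1

lemma fm_eq_card (m n : ℕ) :
    fm m n = ((Fintype.piFinset (fun _ : Fin m => Finset.range (n + 1))).filter
      (fun a => wsum a = n ∧ InjP a Finset.univ)).card := by
  classical
  set S := (Fintype.piFinset (fun _ : Fin m => Finset.range (n + 1))).filter
      (fun a => wsum a = n ∧ InjP a Finset.univ) with hS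
  have e : {P : n.Partition // (∀ x ∈ P.parts, x ≤ m) ∧ distinctMult P} ≃ {a // a ∈ S} := by
    refine
      { toFun := fun P => ⟨fun i => P.1.parts.count ((i : ℕ) + 1), ?_⟩
        invFun := fun a => ⟨⟨partsOf m a.1, fun {x} hx => mem_partsOf_pos _ hx, ?_⟩, ?_, ?_⟩
        left_inv := ?_
        right_inv := ?_ }
    · -- membership for toFun
      obtain ⟨P, hPle, hPdm⟩ := P
      have hcnt : ∀ j, P.parts.count j ≤ n := by
        intro j
        calc P.parts.count j ≤ P.parts.sum := count_le_sum (fun x hx => P.parts_pos hx) j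
          _ = n := P.parts_sum
      rw [hS, Finset.mem_filter, Fintype.mem_piFinset]
      refine ⟨fun i => Finset.mem_range.2 (Nat.lt_succ_of_le (hcnt _)), ?_, ?_⟩
      · -- wsum = n
        have := sum_partsOf (m := m) (fun i => P.parts.count ((i : ℕ) + 1))
        rw [partsOf_count_eq P hPle, P.parts_sum] at this
        exact this.symm
      · -- InjP
        intro y _ z _ hne hy0
        dsimp only at hy0 ⊢
        by_cases hz0 : P.parts.count ((z : ℕ) + 1) = 0
        · rw [hz0]; exact hy0
        · have hymem : ((y : ℕ) + 1) ∈ P.parts := by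
            rw [← Multiset.count_pos]; omega
          have hzmem : ((z : ℕ) + 1) ∈ P.parts := by
            rw [← Multiset.count_pos]; omega
          exact hPdm _ hymem _ hzmem (fun h => hne (Fin.ext (by omega)))
    · -- parts_sum for invFun
      rw [sum_partsOf]
      exact (Finset.mem_filter.1 a.2).2.1
    · -- parts ≤ m
      intro x hx
      exact mem_partsOf_le _ hx
    · -- distinctMult
      have hInj := (Finset.mem_filter.1 a.2).2.2
      intro i hi j hj hne
      dsimp only at hi hj ⊢
      have hipos := mem_partsOf_pos _ hi
      have hilem := mem_partsOf_le _ hi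
      have hjpos := mem_partsOf_pos _ hj
      have hjlem := mem_partsOf_le _ hj
      set i₀ : Fin m := ⟨i - 1, by omega⟩ with hi₀
      set j₀ : Fin m := ⟨j - 1, by omega⟩ with hj₀
      have hieq : i = (i₀ : ℕ) + 1 := by simp [hi₀]; omega
      have hjeq : j = (j₀ : ℕ) + 1 := by simp [hj₀]; omega
      rw [hieq, hjeq, count_partsOf, count_partsOf]
      have hi0 : a.1 i₀ ≠ 0 := by
        have hcount : (partsOf m a.1).count i ≠ 0 := Multiset.count_ne_zero.2 hi
        rw [← count_partsOf a.1 i₀, ← hieq]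
        exact hcount
      exact hInj i₀ (Finset.mem_univ _) j₀ (Finset.mem_univ _)
        (fun h => hne (by rw [hieq, hjeq, h])) hi0
    · -- left_inv
      rintro ⟨P, hPle, hPdm⟩
      apply Subtype.ext
      apply Nat.Partition.ext
      exact partsOf_count_eq P hPle
    · -- right_inv
      rintro ⟨a, ha⟩
      apply Subtype.ext
      funext i
      exact count_partsOf a i
  rw [fm, Nat.card_congr e, Nat.card_eq_finsetCard]

end T3

/-- `∑_{n ≥ 0} f_m(n) q^n = ∑_{set partitions C of {1,…,m}} ∏_{B ∈ C} poids(B)`. -/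
theorem gf_fm_eq_sum_set_partitions (m : ℕ) (hm : 1 ≤ m) :
    (PowerSeries.mk fun n => (fm m n : ℚ)) =
      ∑ C ∈ Finset.univ.filter (fun C : Finset (Finset (Fin m)) => IsSetPartition m C),
        ∏ B ∈ C, poids B := by
  ext n
  rw [PowerSeries.coeff_mk, map_sum]
  have hfil : Finset.univ.filter (fun C : Finset (Finset (Fin m)) => IsSetPartition m C)
      = Finset.univ.filter (isPart (Finset.univ : Finset (Fin m))) := by
    apply Finset.filter_congr
    intro C _
    constructor
    · rintro ⟨h1, h2, h3⟩
      exact ⟨h1, fun B _ => Finset.subset_univ B, h2, fun x _ => h3 x⟩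
    · rintro ⟨h1, _, h3, h4⟩
      exact ⟨h1, h3, fun x => h4 x (Finset.mem_univ x)⟩
  rw [hfil]
  rw [Finset.sum_congr rfl
    (fun C hC => coeff_prod_poids (n := n) ((Finset.mem_filter.1 hC).2))]
  rw [Finset.sum_comm]
  have hinner : ∀ a ∈ Fintype.piFinset (fun _ : Fin m => Finset.range (n + 1)),
      (∑ C ∈ Finset.univ.filter (isPart (Finset.univ : Finset (Fin m))),
        if wsum a = n then ∏ B ∈ C, cw a B else 0)
      = if wsum a = n ∧ InjP a Finset.univ then (1 : ℚ) else 0 := by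
    intro a _
    by_cases hw : wsum a = n
    · rw [Finset.sum_congr rfl (fun C _ => if_pos hw), T2 a Finset.univ]
      by_cases hI : InjP a Finset.univ
      · rw [if_pos hI, if_pos ⟨hw, hI⟩]
      · rw [if_neg hI, if_neg (fun h => hI h.2)]
    · rw [Finset.sum_congr rfl (fun C _ => if_neg hw), Finset.sum_const, smul_zero,
        if_neg (fun h => hw h.1)]
  rw [Finset.sum_congr rfl hinner, Finset.sum_boole, fm_eq_card]
end

section
/- The generating function sum over n ≥ 0 of f_m(n) q^n is a rational function of q whose poles are all roots of unity, and the pole at q = 1 has order exactly m, while all other poles have order strictly less than m. -/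
open Polynomial Finset

namespace GFx

/-- partial sums: `pA L j = L[0] + ... + L[j]`. -/
def pA (L : List ℕ) (j : ℕ) : ℕ := (L.take (j+1)).sum

lemma pA_succ (L : List ℕ) (j : ℕ) (h : j + 1 < L.length) :
    pA L (j+1) = pA L j + L.get ⟨j+1, h⟩ := by
  simp [pA, List.sum_take_succ L (j+1) h]

lemma pA_zero_eq (L : List ℕ) (h : 0 < L.length) : pA L 0 = L.get ⟨0, h⟩ := by
  have := List.sum_take_succ L 0 h
  simpa [pA] using this

lemma pA_pos (L : List ℕ) (hL : ∀ a ∈ L, 1 ≤ a) (j : ℕ) (hj : j < L.length) :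
    1 ≤ pA L j := by
  induction j with
  | zero =>
      rw [pA_zero_eq L (by omega)]
      exact hL _ (List.get_mem _ _)
  | succ i ih =>
      rw [pA_succ L i hj]
      have := ih (by omega)
      omega

lemma pA_le_sum (L : List ℕ) (j : ℕ) : pA L j ≤ L.sum := by
  have hsub := List.take_sublist (j+1) L
  simpa [pA] using hsub.sum_le_sum (fun a _ => Nat.zero_le a)

/-- key combinatorial lemma: among the partial sums of a duplicate-free list with entries
in `[1, m]`, at most `m - 1` are divisible by any fixed `d ≥ 2`. -/
lemma card_dvd_pA_le (m d : ℕ) (hd : 2 ≤ d) (L : List ℕ) (hnd : L.Nodup)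
    (hmem : ∀ a ∈ L, a ∈ Finset.Icc 1 m) :
    ((Finset.range L.length).filter (fun j => d ∣ pA L j)).card ≤ m - 1 := by
  classical
  have hsub : L.toFinset ⊆ Finset.Icc 1 m := by
    intro a ha; exact hmem a (List.mem_toFinset.mp ha)
  have hlen : L.length ≤ m := by
    have := Finset.card_le_card hsub
    rw [List.toFinset_card_of_nodup hnd] at this
    simpa [Nat.card_Icc] using this
  have hfil : ((Finset.range L.length).filter (fun j => d ∣ pA L j)).card ≤ L.length := by
    simpa using Finset.card_le_card (Finset.filter_subset _ (Finset.range L.length))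
  rcases Nat.eq_zero_or_pos m with rfl | h1m
  · omega
  rcases Nat.lt_or_ge L.length m with h | h
  · omega
  · -- L.length = m, so L is a permutation of [1..m]; in particular 1 ∈ L
    have hlm : L.length = m := le_antisymm hlen h
    have hTF : L.toFinset = Finset.Icc 1 m := by
      apply Finset.eq_of_subset_of_card_le hsub
      rw [List.toFinset_card_of_nodup hnd, hlm]
      simp [Nat.card_Icc]
    have h1 : (1 : ℕ) ∈ L := by
      rw [← List.mem_toFinset, hTF]
      simp; omega
    -- find a partial sum not divisible by d
    have hex : ∃ j ∈ Finset.range L.length, ¬ d ∣ pA L j := by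
      obtain ⟨j0, hj0lt, hj0get⟩ : ∃ j, ∃ h : j < L.length, L.get ⟨j, h⟩ = 1 := by
        have hidx : L.idxOf 1 < L.length := List.idxOf_lt_length_iff.mpr h1
        exact ⟨_, hidx, List.idxOf_get hidx⟩
      match j0, hj0lt, hj0get with
      | 0, hlt, hget =>
          refine ⟨0, Finset.mem_range.mpr hlt, ?_⟩
          rw [pA_zero_eq L hlt, hget]
          intro hdvd
          have := Nat.le_of_dvd one_pos hdvd
          omega
      | (i+1), hlt, hget =>
          by_cases hdi : d ∣ pA L i
          · refine ⟨i + 1, Finset.mem_range.mpr hlt, ?_⟩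
            rw [pA_succ L i hlt, hget]
            intro hdvd
            have : d ∣ 1 := (Nat.dvd_add_right hdi).mp hdvd
            have := Nat.le_of_dvd one_pos this
            omega
          · exact ⟨i, Finset.mem_range.mpr (by omega), hdi⟩
    obtain ⟨j, hj, hjd⟩ := hex
    have hss : ((Finset.range L.length).filter (fun j => d ∣ pA L j)) ⊂ Finset.range L.length := by
      refine Finset.ssubset_iff_of_subset (Finset.filter_subset _ _) |>.mpr ⟨j, hj, by
        simp only [Finset.mem_filter]; tauto⟩
    have := Finset.card_lt_card hss
    simp only [Finset.card_range] at this
    omega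




/-- truncated geometric polynomial `1 + X + ... + X^(e-1)`. -/
noncomputable def gp (e : ℕ) : ℚ[X] := ∑ i ∈ Finset.range e, X ^ i

lemma one_sub_X_pow (e : ℕ) : (1 - X ^ e : ℚ[X]) = (1 - X) * gp e := by
  have h := geom_sum_mul (X : ℚ[X]) e
  have : (1 - X) * gp e = -((gp e) * (X - 1)) := by ring
  rw [this, gp, h]; ring

lemma X_sub_one_ne : (X - 1 : ℚ[X]) ≠ 0 := by
  intro h
  have := congrArg (eval 2) h
  norm_num at this

lemma gp_eq_prod (Nn e : ℕ) (he1 : 1 ≤ e) (heN : e ≤ Nn) :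
    gp e = ∏ d ∈ Finset.Icc 2 Nn, (cyclotomic d ℚ) ^ (if d ∣ e then 1 else 0) := by
  have hdivsub : e.divisors ⊆ Finset.Icc 1 Nn := by
    intro d hd
    rcases Nat.mem_divisors.mp hd with ⟨hdvd, hne⟩
    exact Finset.mem_Icc.mpr ⟨Nat.pos_of_dvd_of_pos hdvd (by omega), le_trans (Nat.le_of_dvd (by omega) hdvd) heN⟩
  have key : (X ^ e - 1 : ℚ[X]) = ∏ d ∈ Finset.Icc 1 Nn, (cyclotomic d ℚ) ^ (if d ∣ e then 1 else 0) := by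
    have e1 : ∏ d ∈ Finset.Icc 1 Nn, (cyclotomic d ℚ) ^ (if d ∣ e then 1 else 0)
        = ∏ d ∈ e.divisors, (cyclotomic d ℚ) ^ (if d ∣ e then 1 else 0) := by
      refine (Finset.prod_subset hdivsub ?_).symm
      intro d _ hnd
      have : ¬ d ∣ e := fun hdvd => hnd (Nat.mem_divisors.mpr ⟨hdvd, by omega⟩)
      simp [this]
    have e2 : ∏ d ∈ e.divisors, (cyclotomic d ℚ) ^ (if d ∣ e then 1 else 0)
        = ∏ d ∈ e.divisors, cyclotomic d ℚ := by
      apply Finset.prod_congr rfl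
      intro d hd
      rcases Nat.mem_divisors.mp hd with ⟨hdvd, _⟩
      simp [hdvd]
    rw [e1, e2, prod_cyclotomic_eq_X_pow_sub_one (by omega) ℚ]
  have hsplit : Finset.Icc 1 Nn = insert 1 (Finset.Icc 2 Nn) := by
    ext a
    simp [Finset.mem_Icc, Finset.mem_insert]
    omega
  rw [hsplit, Finset.prod_insert (by simp)] at key
  have h1 : ((cyclotomic 1 ℚ) ^ (if 1 ∣ e then 1 else 0) : ℚ[X]) = X - 1 := by
    simp [cyclotomic_one]
  rw [h1] at key
  apply mul_left_cancel₀ X_sub_one_ne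
  rw [← key]
  have := one_sub_X_pow e
  have h2 : (X - 1 : ℚ[X]) * gp e = -((1 - X) * gp e) := by ring
  rw [h2, ← this]; ring

variable (m : ℕ)

/-- `Nm m = 1 + 2 + ... + m`. -/
def Nm : ℕ := ∑ a ∈ Finset.Icc 1 m, a

noncomputable def QQ : ℚ[X] := ∏ d ∈ Finset.Icc 2 (Nm m), (cyclotomic d ℚ) ^ (m - 1)

/-- number of partial sums of `L` divisible by `d`. -/
def nd (d : ℕ) (L : List ℕ) : ℕ :=
  ((Finset.range L.length).filter (fun j => d ∣ pA L j)).card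

noncomputable def RL (L : List ℕ) : ℚ[X] :=
  ∏ d ∈ Finset.Icc 2 (Nm m), (cyclotomic d ℚ) ^ (m - 1 - nd d L)

noncomputable def GLp (L : List ℕ) : ℚ[X] := ∏ j ∈ Finset.range L.length, gp (pA L j)

noncomputable def DLp (L : List ℕ) : ℚ[X] :=
  ∏ j ∈ Finset.range L.length, (1 - X ^ (pA L j))

/-- conditions on `L`. -/
def okL (L : List ℕ) : Prop := L.Nodup ∧ ∀ a ∈ L, a ∈ Finset.Icc 1 m

lemma sum_le_Nm {L : List ℕ} (h : okL m L) : L.sum ≤ Nm m := by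
  classical
  obtain ⟨hnd, hmem⟩ := h
  have : L.toFinset.sum id ≤ (Finset.Icc 1 m).sum id := by
    apply Finset.sum_le_sum_of_subset
    intro a ha; exact hmem a (List.mem_toFinset.mp ha)
  rw [List.sum_toFinset _ hnd] at this
  simpa [Nm, List.map_id] using this

lemma length_le {L : List ℕ} (h : okL m L) : L.length ≤ m := by
  classical
  obtain ⟨hnd, hmem⟩ := h
  have hsub : L.toFinset ⊆ Finset.Icc 1 m := fun a ha => hmem a (List.mem_toFinset.mp ha)
  have := Finset.card_le_card hsub
  rw [List.toFinset_card_of_nodup hnd] at this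
  simpa [Nat.card_Icc] using this

lemma pA_mem_Icc {L : List ℕ} (h : okL m L) {j : ℕ} (hj : j < L.length) :
    1 ≤ pA L j ∧ pA L j ≤ Nm m := by
  refine ⟨pA_pos L (fun a ha => (Finset.mem_Icc.mp (h.2 a ha)).1) j hj, ?_⟩
  exact le_trans (pA_le_sum L j) (sum_le_Nm m h)

lemma GLp_eq_prod {L : List ℕ} (h : okL m L) :
    GLp L = ∏ d ∈ Finset.Icc 2 (Nm m), (cyclotomic d ℚ) ^ (nd d L) := by
  rw [GLp]
  have : ∀ j ∈ Finset.range L.length,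
      gp (pA L j) = ∏ d ∈ Finset.Icc 2 (Nm m), (cyclotomic d ℚ) ^ (if d ∣ pA L j then 1 else 0) := by
    intro j hj
    have := pA_mem_Icc m h (Finset.mem_range.mp hj)
    exact gp_eq_prod (Nm m) (pA L j) this.1 this.2
  rw [Finset.prod_congr rfl this, Finset.prod_comm]
  apply Finset.prod_congr rfl
  intro d _
  rw [Finset.prod_pow_eq_pow_sum]
  congr 1
  rw [Finset.sum_boole]
  rfl

lemma GLp_mul_RL {L : List ℕ} (hm : 1 ≤ m) (h : okL m L) : GLp L * RL m L = QQ m := by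
  rw [GLp_eq_prod m h, RL, QQ, ← Finset.prod_mul_distrib]
  apply Finset.prod_congr rfl
  intro d hd
  rw [← pow_add]
  congr 1
  have hnd : nd d L ≤ m - 1 := by
    have := card_dvd_pA_le m d (Finset.mem_Icc.mp hd).1 L h.1 h.2
    exact this
  omega

lemma DLp_eq {L : List ℕ} : DLp L = (1 - X) ^ L.length * GLp L := by
  rw [DLp, GLp, Finset.prod_congr rfl (fun j _ => one_sub_X_pow (pA L j)),
    Finset.prod_mul_distrib, Finset.prod_const, Finset.card_range]

lemma key_poly_factor {L : List ℕ} (hm : 1 ≤ m) (h : okL m L) :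
    (1 - X : ℚ[X]) ^ m * QQ m = DLp L * ((1 - X) ^ (m - L.length) * RL m L) := by
  have hk := length_le m h
  rw [DLp_eq]
  have : (1 - X : ℚ[X]) ^ m = (1 - X) ^ L.length * (1 - X) ^ (m - L.length) := by
    rw [← pow_add]; congr 1; omega
  rw [this, ← GLp_mul_RL m hm h]
  ring



variable (m : ℕ)

lemma cyc_eval_one_pos {d : ℕ} (hd : 2 ≤ d) : 0 < (cyclotomic d ℚ).eval 1 := by
  have hR : 0 < (cyclotomic d ℝ).eval 1 := by
    rcases eq_or_lt_of_le hd with h | h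
    · rw [← h, cyclotomic_two]; norm_num
    · exact cyclotomic_pos h 1
  have hcast : (cyclotomic d ℝ).eval 1 = (((cyclotomic d ℚ).eval 1 : ℚ) : ℝ) := by
    rw [← map_cyclotomic d (algebraMap ℚ ℝ), eval_one_map]
    simp
  rw [hcast] at hR
  exact_mod_cast hR

lemma QQ_eval_one_pos : 0 < (QQ m).eval 1 := by
  rw [QQ, eval_prod]
  apply Finset.prod_pos
  intro d hd
  rw [eval_pow]
  exact pow_pos (cyc_eval_one_pos (Finset.mem_Icc.mp hd).1) _

lemma RL_eval_one_pos (L : List ℕ) : 0 < (RL m L).eval 1 := by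
  rw [RL, eval_prod]
  apply Finset.prod_pos
  intro d hd
  rw [eval_pow]
  exact pow_pos (cyc_eval_one_pos (Finset.mem_Icc.mp hd).1) _

lemma QQ_ne_zero : QQ m ≠ 0 := by
  intro h
  have := QQ_eval_one_pos m
  rw [h] at this
  simp at this

-- root multiplicity helpers
lemma rm_le_one_of_squarefree (p : ℂ[X]) (hsq : Squarefree p) (z : ℂ) :
    p.rootMultiplicity z ≤ 1 := by
  by_contra hc
  push_neg at hc
  have h2 : (X - C z) * (X - C z) ∣ p := by
    have : (X - C z) ^ 2 ∣ (X - C z) ^ (p.rootMultiplicity z) := pow_dvd_pow _ (by omega)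
    have := this.trans (pow_rootMultiplicity_dvd p z)
    rwa [sq] at this
  exact not_isUnit_X_sub_C z (hsq _ h2)

lemma rm_le_of_dvd {p q : ℂ[X]} (hq : q ≠ 0) (h : p ∣ q) (z : ℂ) :
    p.rootMultiplicity z ≤ q.rootMultiplicity z := by
  rw [le_rootMultiplicity_iff hq]
  exact dvd_trans (pow_rootMultiplicity_dvd p z) h

lemma rm_cyclotomic_le_one (d : ℕ) (hd : 1 ≤ d) (z : ℂ) :
    (cyclotomic d ℂ).rootMultiplicity z ≤ 1 := by
  have hsep : (X ^ d - 1 : ℂ[X]).Separable := by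
    apply X_pow_sub_one_separable_iff.mpr
    exact_mod_cast Nat.cast_ne_zero.mpr (by omega)
  have hne : (X ^ d - 1 : ℂ[X]) ≠ 0 := by
    intro h
    have := congrArg (eval 0) h
    simp [zero_pow (by omega : d ≠ 0)] at this
  calc (cyclotomic d ℂ).rootMultiplicity z
      ≤ (X ^ d - 1 : ℂ[X]).rootMultiplicity z :=
        rm_le_of_dvd hne (cyclotomic.dvd_X_pow_sub_one d ℂ) z
    _ ≤ 1 := rm_le_one_of_squarefree _ hsep.squarefree z

lemma rm_prod {ι : Type*} (s : Finset ι) (f : ι → ℂ[X]) (hf : ∀ i ∈ s, f i ≠ 0) (z : ℂ) :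
    (∏ i ∈ s, f i).rootMultiplicity z = ∑ i ∈ s, (f i).rootMultiplicity z := by
  classical
  induction s using Finset.cons_induction with
  | empty =>
      rw [Finset.prod_empty, Finset.sum_empty]
      exact rootMultiplicity_eq_zero (by simp [IsRoot])
  | cons a s ha ih =>
      have hane : f a ≠ 0 := hf a (Finset.mem_cons_self a s)
      have hsne : ∀ i ∈ s, f i ≠ 0 := fun i hi => hf i (Finset.mem_cons.mpr (Or.inr hi))
      have hpne : (∏ i ∈ s, f i) ≠ 0 := Finset.prod_ne_zero_iff.mpr hsne
      rw [Finset.prod_cons, Finset.sum_cons,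
        Polynomial.rootMultiplicity_mul (mul_ne_zero hane hpne), ih hsne]

lemma rm_pow (p : ℂ[X]) (hp : p ≠ 0) (k : ℕ) (z : ℂ) :
    (p ^ k).rootMultiplicity z = k * p.rootMultiplicity z := by
  induction k with
  | zero =>
      rw [pow_zero]
      rw [rootMultiplicity_eq_zero (by simp [IsRoot])]
      ring
  | succ i ih =>
      rw [pow_succ, Polynomial.rootMultiplicity_mul (mul_ne_zero (pow_ne_zero _ hp) hp), ih]
      ring

lemma QQ_map_eq : (QQ m).map (algebraMap ℚ ℂ)
    = (∏ d ∈ Finset.Icc 2 (Nm m), cyclotomic d ℂ) ^ (m - 1) := by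
  rw [QQ, Finset.prod_pow, Polynomial.map_pow, Polynomial.map_prod]
  congr 1
  exact Finset.prod_congr rfl (fun d _ => map_cyclotomic d (algebraMap ℚ ℂ))

lemma QQ_roots (hm : 1 ≤ m) (z : ℂ) (hroot : ((QQ m).map (algebraMap ℚ ℂ)).IsRoot z) :
    (∃ k : ℕ, 0 < k ∧ z ^ k = 1) ∧
      ((QQ m).map (algebraMap ℚ ℂ)).rootMultiplicity z < m := by
  classical
  have hBne : ∀ d ∈ Finset.Icc 2 (Nm m), cyclotomic d ℂ ≠ 0 :=
    fun d _ => cyclotomic_ne_zero d ℂ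
  have hprodne : (∏ d ∈ Finset.Icc 2 (Nm m), cyclotomic d ℂ) ≠ 0 :=
    Finset.prod_ne_zero_iff.mpr hBne
  -- find the cyclotomic factor vanishing at z
  have heval : (∏ d ∈ Finset.Icc 2 (Nm m), (cyclotomic d ℂ).eval z) ^ (m - 1) = 0 := by
    have := hroot
    rw [IsRoot, QQ_map_eq, eval_pow, eval_prod] at this
    exact this
  rw [pow_eq_zero_iff'] at heval
  obtain ⟨hz0, hm1⟩ := heval
  obtain ⟨d, hd, hzd⟩ := Finset.prod_eq_zero_iff.mp hz0
  have hd2 : 2 ≤ d := (Finset.mem_Icc.mp hd).1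
  haveI : NeZero ((d : ℂ)) := ⟨Nat.cast_ne_zero.mpr (by omega)⟩
  have hprim : IsPrimitiveRoot z d := isRoot_cyclotomic_iff.mp hzd
  refine ⟨⟨d, by omega, hprim.pow_eq_one⟩, ?_⟩
  -- multiplicity bound
  rw [QQ_map_eq, rm_pow _ hprodne, rm_prod _ _ hBne]
  have hsum : ∑ d' ∈ Finset.Icc 2 (Nm m), (cyclotomic d' ℂ).rootMultiplicity z
      = (cyclotomic d ℂ).rootMultiplicity z := by
    apply Finset.sum_eq_single d
    · intro d' hd' hne
      apply rootMultiplicity_eq_zero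
      intro hroot'
      haveI : NeZero ((d' : ℂ)) :=
        ⟨Nat.cast_ne_zero.mpr (by have := (Finset.mem_Icc.mp hd').1; omega)⟩
      have hprim' : IsPrimitiveRoot z d' := isRoot_cyclotomic_iff.mp hroot'
      exact hne (hprim'.unique hprim)
    · intro h; exact absurd hd h
  rw [hsum]
  have := rm_cyclotomic_le_one d (by omega) z
  have hb : (m - 1) * (cyclotomic d ℂ).rootMultiplicity z ≤ m - 1 := by
    calc (m-1) * (cyclotomic d ℂ).rootMultiplicity z ≤ (m-1) * 1 := Nat.mul_le_mul_left _ this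
    _ = m - 1 := by ring
  omega




/-- number of solutions of `∑ w j * t j = n` with all `t j ≥ 1`. -/
noncomputable def cnt (k : ℕ) (w : ℕ → ℕ) (n : ℕ) : ℕ :=
  Nat.card {t : Fin k → ℕ // (∀ j, 1 ≤ t j) ∧ ∑ j : Fin k, w j.val * t j = n}

lemma cnt_zero (w : ℕ → ℕ) (n : ℕ) : cnt 0 w n = if n = 0 then 1 else 0 := by
  rw [cnt]
  rcases eq_or_ne n 0 with rfl | hn
  · haveI : Subsingleton {t : Fin 0 → ℕ // (∀ j, 1 ≤ t j) ∧ ∑ j : Fin 0, w j.val * t j = 0} := by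
      constructor
      rintro ⟨t, _⟩ ⟨t', _⟩
      apply Subtype.ext
      funext j
      exact j.elim0
    haveI : Nonempty {t : Fin 0 → ℕ // (∀ j, 1 ≤ t j) ∧ ∑ j : Fin 0, w j.val * t j = 0} :=
      ⟨⟨fun j => j.elim0, fun j => j.elim0, by simp⟩⟩
    simp [Nat.card_unique]
  · haveI : IsEmpty {t : Fin 0 → ℕ // (∀ j, 1 ≤ t j) ∧ ∑ j : Fin 0, w j.val * t j = n} := by
      constructor
      rintro ⟨t, _, h⟩
      simp at h
      exact hn h.symm
    rw [if_neg hn]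
    exact Nat.card_of_isEmpty

lemma tj_le {k : ℕ} {w : ℕ → ℕ} {n : ℕ} (hw : ∀ j, j < k → 1 ≤ w j)
    {t : Fin k → ℕ} (h2 : ∑ j : Fin k, w j.val * t j = n) (j : Fin k) : t j ≤ n := by
  have h1 : w j.val * t j ≤ n := by
    rw [← h2]
    exact Finset.single_le_sum (f := fun (i : Fin k) => w i.val * t i)
      (fun i _ => Nat.zero_le _) (Finset.mem_univ j)
  have h3 : t j ≤ w j.val * t j := Nat.le_mul_of_pos_left _ (hw j.val j.isLt)
  omega

lemma cnt_finite (k : ℕ) (w : ℕ → ℕ) (n : ℕ) (hw : ∀ j, j < k → 1 ≤ w j) :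
    Finite {t : Fin k → ℕ // (∀ j, 1 ≤ t j) ∧ ∑ j : Fin k, w j.val * t j = n} := by
  apply Finite.of_injective
    (fun t => (fun j => (⟨t.1 j, Nat.lt_succ_of_le (tj_le hw t.2.2 j)⟩ : Fin (n+1)) : Fin k → Fin (n+1)))
  rintro ⟨t, ht⟩ ⟨t', ht'⟩ h
  apply Subtype.ext
  funext j
  exact congrArg Fin.val (congrFun h j)

lemma cnt_low (k : ℕ) (w : ℕ → ℕ) (n : ℕ) (hn : n < w 0) : cnt (k+1) w n = 0 := by
  rw [cnt]
  haveI : IsEmpty {t : Fin (k+1) → ℕ // (∀ j, 1 ≤ t j) ∧ ∑ j : Fin (k+1), w j.val * t j = n} := by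
    constructor
    rintro ⟨t, h1, h2⟩
    have hle : w 0 * t 0 ≤ n := by
      have h3 := Finset.single_le_sum (f := fun (i : Fin (k+1)) => w i.val * t i)
        (fun i _ => Nat.zero_le _) (Finset.mem_univ (0 : Fin (k+1)))
      rw [h2] at h3
      simpa using h3
    have h01 : 1 ≤ t 0 := h1 0
    have h02 : w 0 ≤ w 0 * t 0 := Nat.le_mul_of_pos_right _ (by omega)
    omega
  exact Nat.card_of_isEmpty

lemma sum_succ_expand {k : ℕ} (w : ℕ → ℕ) (t : Fin (k+1) → ℕ) :
    ∑ j : Fin (k+1), w j.val * t j = w 0 * t 0 + ∑ j : Fin k, w (j.val+1) * t j.succ := by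
  rw [Fin.sum_univ_succ]
  rfl

lemma cnt_rec (k : ℕ) (w : ℕ → ℕ) (n : ℕ) (hw : ∀ j, j < k + 1 → 1 ≤ w j) (hn : w 0 ≤ n) :
    cnt (k+1) w n = cnt k (fun j => w (j+1)) (n - w 0) + cnt (k+1) w (n - w 0) := by
  classical
  let A := {s : Fin k → ℕ // (∀ j, 1 ≤ s j) ∧ ∑ j : Fin k, w (j.val+1) * s j = n - w 0}
  let B := {u : Fin (k+1) → ℕ // (∀ j, 1 ≤ u j) ∧ ∑ j : Fin (k+1), w j.val * u j = n - w 0}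
  let C := {t : Fin (k+1) → ℕ // (∀ j, 1 ≤ t j) ∧ ∑ j : Fin (k+1), w j.val * t j = n}
  haveI : Finite A := cnt_finite k (fun j => w (j+1)) (n - w 0) (fun j hj => hw (j+1) (by omega))
  haveI : Finite B := cnt_finite (k+1) w (n - w 0) hw
  have hfa : ∀ s : A, (∀ j, 1 ≤ (Fin.cons 1 s.1 : Fin (k+1) → ℕ) j) ∧
      ∑ j : Fin (k+1), w j.val * (Fin.cons 1 s.1 : Fin (k+1) → ℕ) j = n := by
    rintro ⟨s, hs1, hs2⟩
    constructor
    · intro j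
      refine Fin.cases ?_ ?_ j
      · simp
      · intro i; simpa using hs1 i
    · rw [sum_succ_expand]
      simp only [Fin.cons_zero, Fin.cons_succ, mul_one]
      rw [hs2]; omega
  have hfb : ∀ u : B, (∀ j, 1 ≤ (Fin.cons (u.1 0 + 1) (Fin.tail u.1) : Fin (k+1) → ℕ) j) ∧
      ∑ j : Fin (k+1), w j.val * (Fin.cons (u.1 0 + 1) (Fin.tail u.1) : Fin (k+1) → ℕ) j = n := by
    rintro ⟨u, hu1, hu2⟩
    constructor
    · intro j
      refine Fin.cases ?_ ?_ j
      · simp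
      · intro i; simpa [Fin.tail] using hu1 i.succ
    · rw [sum_succ_expand]
      simp only [Fin.cons_zero, Fin.cons_succ]
      rw [sum_succ_expand] at hu2
      have e1 : w 0 * (u 0 + 1) = w 0 * u 0 + w 0 := by ring
      have e2 : ∑ j : Fin k, w (j.val+1) * Fin.tail u j = ∑ j : Fin k, w (j.val+1) * u j.succ := rfl
      rw [e1, e2]
      omega
  let f : A ⊕ B → C := Sum.elim (fun s => ⟨(Fin.cons 1 s.1 : Fin (k+1) → ℕ), hfa s⟩)
    (fun u => ⟨(Fin.cons (u.1 0 + 1) (Fin.tail u.1) : Fin (k+1) → ℕ), hfb u⟩)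
  have key : Nat.card (A ⊕ B) = Nat.card C := by
    apply Nat.card_eq_of_bijective f
    constructor
    · rintro (s | u) (s' | u') h <;>
        replace h := congrArg Subtype.val h <;>
        simp only [f, Sum.elim_inl, Sum.elim_inr] at h
      · congr 1
        apply Subtype.ext
        funext j
        have := congrFun h j.succ
        simpa using this
      · exfalso
        have := congrFun h 0
        simp only [Fin.cons_zero] at this
        have := u'.2.1 0
        omega
      · exfalso
        have := congrFun h 0
        simp only [Fin.cons_zero] at this
        have := u.2.1 0
        omega
      · congr 1
        apply Subtype.ext
        funext j
        refine Fin.cases ?_ ?_ j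
        · have := congrFun h 0
          simp only [Fin.cons_zero] at this
          omega
        · intro i
          have := congrFun h i.succ
          simpa [Fin.tail] using this
    · rintro ⟨t, ht1, ht2⟩
      by_cases ht0 : t 0 = 1
      · have hs2 : ∑ j : Fin k, w (j.val+1) * Fin.tail t j = n - w 0 := by
          rw [sum_succ_expand] at ht2
          have e2 : ∑ j : Fin k, w (j.val+1) * Fin.tail t j
              = ∑ j : Fin k, w (j.val+1) * t j.succ := rfl
          rw [e2]
          rw [ht0, mul_one] at ht2
          omega
        refine ⟨Sum.inl ⟨Fin.tail t, fun j => ht1 j.succ, hs2⟩, ?_⟩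
        apply Subtype.ext
        simp only [f, Sum.elim_inl]
        have hcst : Fin.cons (t 0) (Fin.tail t) = t := Fin.cons_self_tail t
        rw [ht0] at hcst
        exact hcst
      · have ht0' : 1 ≤ t 0 := ht1 0
        have hu1 : ∀ j, 1 ≤ Fin.cons (t 0 - 1) (Fin.tail t) j := by
          intro j
          refine Fin.cases ?_ ?_ j
          · simp only [Fin.cons_zero]; omega
          · intro i; simpa [Fin.tail] using ht1 i.succ
        have hu2 : ∑ j : Fin (k+1), w j.val * (Fin.cons (t 0 - 1) (Fin.tail t)) j = n - w 0 := by
          rw [sum_succ_expand]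
          simp only [Fin.cons_zero, Fin.cons_succ]
          rw [sum_succ_expand] at ht2
          have e1 : w 0 * t 0 = w 0 * (t 0 - 1) + w 0 := by
            have h' : t 0 = (t 0 - 1) + 1 := by omega
            calc w 0 * t 0 = w 0 * ((t 0 - 1) + 1) := by rw [← h']
            _ = w 0 * (t 0 - 1) + w 0 := by ring
          have e2 : ∑ j : Fin k, w (j.val+1) * Fin.tail t j
              = ∑ j : Fin k, w (j.val+1) * t j.succ := rfl
          rw [e2]
          omega
        refine ⟨Sum.inr ⟨Fin.cons (t 0 - 1) (Fin.tail t), hu1, hu2⟩, ?_⟩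
        apply Subtype.ext
        simp only [f, Sum.elim_inr, Fin.cons_zero, Fin.tail_cons]
        have h' : t 0 - 1 + 1 = t 0 := by omega
        rw [h']
        exact Fin.cons_self_tail t
  rw [Nat.card_sum] at key
  exact key.symm

lemma coeff_mk_mul_one_sub_pow (f : ℕ → ℚ) (e n : ℕ) :
    (PowerSeries.coeff n) (PowerSeries.mk f * (1 - PowerSeries.X ^ e)) =
      f n - (if e ≤ n then f (n - e) else 0) := by
  rw [mul_sub, mul_one, map_sub, PowerSeries.coeff_mul_X_pow']
  simp only [PowerSeries.coeff_mk]

lemma mk_cnt_mul (k : ℕ) (w : ℕ → ℕ) (hw : ∀ j, j < k → 1 ≤ w j) :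
    (PowerSeries.mk fun n => (cnt k w n : ℚ)) *
        ∏ j ∈ Finset.range k, (1 - (PowerSeries.X : PowerSeries ℚ) ^ (w j)) =
      (PowerSeries.X : PowerSeries ℚ) ^ (∑ j ∈ Finset.range k, w j) := by
  induction k generalizing w with
  | zero =>
      simp only [Finset.range_zero, Finset.prod_empty, Finset.sum_empty, pow_zero, mul_one]
      apply PowerSeries.ext
      intro n
      rw [PowerSeries.coeff_mk, cnt_zero, PowerSeries.coeff_one]
      split <;> simp
  | succ k ih =>
      have hw0 : 1 ≤ w 0 := hw 0 (by omega)
      have hstep : (PowerSeries.mk fun n => (cnt (k+1) w n : ℚ)) * (1 - PowerSeries.X ^ (w 0)) =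
          PowerSeries.X ^ (w 0) * PowerSeries.mk fun n => (cnt k (fun j => w (j+1)) n : ℚ) := by
        apply PowerSeries.ext
        intro n
        rw [coeff_mk_mul_one_sub_pow, mul_comm, PowerSeries.coeff_mul_X_pow']
        simp only [PowerSeries.coeff_mk]
        by_cases h : w 0 ≤ n
        · rw [if_pos h, if_pos h, cnt_rec k w n hw h]
          push_cast
          ring
        · rw [if_neg h, if_neg h, cnt_low k w n (by omega)]
          simp
      rw [Finset.prod_range_succ' (fun j => 1 - (PowerSeries.X : PowerSeries ℚ) ^ (w j)) k]
      rw [Finset.sum_range_succ' w k]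
      rw [show (PowerSeries.mk fun n => (cnt (k+1) w n : ℚ)) *
            ((∏ j ∈ Finset.range k, (1 - (PowerSeries.X : PowerSeries ℚ) ^ (w (j+1)))) *
              (1 - PowerSeries.X ^ (w 0))) =
          ((PowerSeries.mk fun n => (cnt (k+1) w n : ℚ)) * (1 - PowerSeries.X ^ (w 0))) *
            (∏ j ∈ Finset.range k, (1 - (PowerSeries.X : PowerSeries ℚ) ^ (w (j+1)))) from by ring]
      rw [hstep, mul_assoc, ih (fun j => w (j+1)) (fun j hj => hw (j+1) (by omega))]
      rw [← pow_add, add_comm]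




/-! suffix sums -/

def ssum {k : ℕ} (t : Fin k → ℕ) (j : ℕ) : ℕ := ∑ l : Fin k, if j ≤ l.val then t l else 0


lemma sum_ite_val {k : ℕ} (f : Fin k → ℕ) {j : ℕ} (h : j < k) :
    ∑ l : Fin k, (if l.val = j then f l else 0) = f ⟨j, h⟩ := by
  rw [Finset.sum_eq_single (⟨j, h⟩ : Fin k)]
  · simp
  · intro b _ hb
    rw [if_neg (fun hc => hb (Fin.ext hc))]
  · intro hc
    exact absurd (Finset.mem_univ _) hc

lemma ssum_of_ge {k : ℕ} (t : Fin k → ℕ) {j : ℕ} (h : k ≤ j) : ssum t j = 0 := by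
  rw [ssum]
  apply Finset.sum_eq_zero
  intro l _
  rw [if_neg (by have := l.isLt; omega)]

lemma ssum_zero_total {k : ℕ} (t : Fin k → ℕ) : ssum t 0 = ∑ l, t l := by
  rw [ssum]
  apply Finset.sum_congr rfl
  intro l _
  rw [if_pos (Nat.zero_le _)]

lemma ssum_step {k : ℕ} (t : Fin k → ℕ) {j : ℕ} (h : j < k) :
    ssum t j = t ⟨j, h⟩ + ssum t (j+1) := by
  rw [ssum, ssum]
  have hpt : ∀ l : Fin k, (if j ≤ l.val then t l else 0) =
      (if l.val = j then t l else 0) + (if j + 1 ≤ l.val then t l else 0) := by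
    intro l
    split_ifs <;> omega
  rw [Finset.sum_congr rfl (fun l _ => hpt l), Finset.sum_add_distrib, sum_ite_val t h]

lemma ssum_anti {k : ℕ} (t : Fin k → ℕ) {j j' : ℕ} (h : j ≤ j') : ssum t j' ≤ ssum t j := by
  apply Finset.sum_le_sum
  intro l _
  by_cases h2 : j' ≤ l.val
  · rw [if_pos h2, if_pos (by omega)]
  · rw [if_neg h2]; exact Nat.zero_le _

lemma ssum_pos {k : ℕ} (t : Fin k → ℕ) (ht : ∀ l, 1 ≤ t l) {j : ℕ} (h : j < k) :
    1 ≤ ssum t j := by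
  rw [ssum_step t h]
  have := ht ⟨j, h⟩
  omega

lemma ssum_strict {k : ℕ} (t : Fin k → ℕ) (ht : ∀ l, 1 ≤ t l) {j j' : ℕ}
    (hj : j < j') (hjk : j < k) : ssum t j' < ssum t j := by
  have h1 : ssum t j' ≤ ssum t (j+1) := ssum_anti t (by omega)
  have h2 := ssum_step t hjk
  have h3 := ht ⟨j, hjk⟩
  omega

lemma ssum_cons_succ (a : ℕ) {k : ℕ} (t : Fin k → ℕ) (j : ℕ) :
    ssum (Fin.cons a t : Fin (k+1) → ℕ) (j+1) = ssum t j := by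
  rw [ssum, Fin.sum_univ_succ]
  rw [if_neg (by simp)]
  rw [zero_add, ssum]
  apply Finset.sum_congr rfl
  intro l _
  simp only [Fin.cons_succ, Fin.val_succ]
  by_cases h : j ≤ l.val
  · rw [if_pos (by omega), if_pos h]
  · rw [if_neg (by omega), if_neg h]

lemma ssum_cons_zero (a : ℕ) {k : ℕ} (t : Fin k → ℕ) :
    ssum (Fin.cons a t : Fin (k+1) → ℕ) 0 = a + ∑ l, t l := by
  rw [ssum_zero_total, Fin.sum_univ_succ]
  simp [Fin.cons_zero, Fin.cons_succ]

/-! the raw map from `(L, t)` to multiplicity functions -/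

variable (m : ℕ)

def wsum (c : Fin m → ℕ) : ℕ := ∑ i : Fin m, ((i : ℕ) + 1) * c i

def distinctVals (c : Fin m → ℕ) : Prop := ∀ i j, c i ≠ 0 → i ≠ j → c i ≠ c j

def psi0 (L : List ℕ) (t : Fin L.length → ℕ) : Fin m → ℕ := fun i =>
  if h : ((i : ℕ) + 1) ∈ L then ssum t (L.idxOf ((i : ℕ) + 1)) else 0

lemma psi0_ne_zero_iff {L : List ℕ} {t : Fin L.length → ℕ} (ht : ∀ l, 1 ≤ t l) (i : Fin m) :
    psi0 m L t i ≠ 0 ↔ ((i : ℕ) + 1) ∈ L := by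
  constructor
  · intro h
    by_contra hc
    rw [psi0, dif_neg hc] at h
    exact h rfl
  · intro h
    rw [psi0, dif_pos h]
    have := ssum_pos t ht (List.idxOf_lt_length_iff.mpr h)
    omega

lemma psi0_distinct {L : List ℕ} (hnd : L.Nodup) {t : Fin L.length → ℕ}
    (ht : ∀ l, 1 ≤ t l) : distinctVals m (psi0 m L t) := by
  intro i j hi hij
  have hiL : ((i : ℕ) + 1) ∈ L := (psi0_ne_zero_iff m ht i).mp hi
  by_cases hjL : ((j : ℕ) + 1) ∈ L
  · rw [psi0, dif_pos hiL, psi0, dif_pos hjL]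
    have hne : L.idxOf ((i : ℕ) + 1) ≠ L.idxOf ((j : ℕ) + 1) := by
      intro he
      have h1 : L.get ⟨L.idxOf ((i : ℕ) + 1), List.idxOf_lt_length_iff.mpr hiL⟩ = (i : ℕ) + 1 :=
        List.idxOf_get _
      have h2 : L.get ⟨L.idxOf ((j : ℕ) + 1), List.idxOf_lt_length_iff.mpr hjL⟩ = (j : ℕ) + 1 :=
        List.idxOf_get _
      have : ((i : ℕ) + 1) = ((j : ℕ) + 1) := by
        rw [← h1, ← h2]
        congr 1
        exact Fin.ext he
      exact hij (by ext; omega)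
    rcases Nat.lt_or_ge (L.idxOf ((i : ℕ) + 1)) (L.idxOf ((j : ℕ) + 1)) with h | h
    · have := ssum_strict t ht h (List.idxOf_lt_length_iff.mpr hiL)
      omega
    · have hlt : L.idxOf ((j : ℕ) + 1) < L.idxOf ((i : ℕ) + 1) := by omega
      have := ssum_strict t ht hlt (List.idxOf_lt_length_iff.mpr hjL)
      omega
  · have hj0 : psi0 m L t j = 0 := by rw [psi0, dif_neg hjL]
    intro he
    exact hi (he.trans hj0)

/-! Abel summation -/

lemma pA_eq_sum (L : List ℕ) (v : ℕ) (hv : v < L.length) :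
    pA L v = ∑ j : Fin L.length, if j.val ≤ v then L.get j else 0 := by
  induction v with
  | zero =>
      rw [pA_zero_eq L (by omega)]
      have hpt : ∀ j : Fin L.length, (if j.val ≤ 0 then L.get j else 0) =
          (if j.val = 0 then L.get j else 0) := by
        intro j
        split_ifs <;> omega
      rw [Finset.sum_congr rfl (fun j _ => hpt j), sum_ite_val (fun j => L.get j) (by omega)]
  | succ v ih =>
      rw [pA_succ L v hv, ih (by omega)]
      have hpt : ∀ j : Fin L.length, (if j.val ≤ v + 1 then L.get j else 0) =
          (if j.val ≤ v then L.get j else 0) + (if j.val = v + 1 then L.get j else 0) := by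
        intro j
        split_ifs <;> omega
      rw [Finset.sum_congr rfl (fun j _ => hpt j), Finset.sum_add_distrib,
        sum_ite_val (fun j => L.get j) hv]

lemma abel (L : List ℕ) (t : Fin L.length → ℕ) :
    ∑ j : Fin L.length, L.get j * ssum t j.val = ∑ j : Fin L.length, pA L j.val * t j := by
  have lhs : ∑ j : Fin L.length, L.get j * ssum t j.val =
      ∑ j : Fin L.length, ∑ l : Fin L.length, (if j.val ≤ l.val then L.get j * t l else 0) := by
    apply Finset.sum_congr rfl
    intro j _
    rw [ssum, Finset.mul_sum]
    apply Finset.sum_congr rfl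
    intro l _
    rw [mul_ite, mul_zero]
  rw [lhs, Finset.sum_comm]
  apply Finset.sum_congr rfl
  intro l _
  rw [pA_eq_sum L l.val l.isLt, Finset.sum_mul]
  apply Finset.sum_congr rfl
  intro j _
  rw [ite_mul, zero_mul]

lemma wsum_psi0 {L : List ℕ} (hL : okL m L) (t : Fin L.length → ℕ) :
    wsum m (psi0 m L t) = ∑ j : Fin L.length, pA L j.val * t j := by
  classical
  rw [← abel, wsum]
  rw [← Finset.sum_filter_of_ne (p := fun i : Fin m => ((i : ℕ) + 1) ∈ L)
    (by intro i _ hne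
        by_cases h : ((i : ℕ) + 1) ∈ L
        · exact h
        · rw [psi0, dif_neg h, mul_zero] at hne; exact absurd rfl hne)]
  refine Finset.sum_bij'
    (i := fun (i : Fin m) (hi : i ∈ Finset.univ.filter (fun i : Fin m => ((i : ℕ) + 1) ∈ L)) =>
      (⟨L.idxOf ((i : ℕ) + 1),
        List.idxOf_lt_length_iff.mpr (Finset.mem_filter.mp hi).2⟩ : Fin L.length))
    (j := fun (j : Fin L.length) (_ : j ∈ Finset.univ) =>
      (⟨L.get j - 1, by
        have hmem := hL.2 (L.get j) (List.get_mem L j)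
        have := Finset.mem_Icc.mp hmem
        omega⟩ : Fin m))
    ?hi ?hj ?left ?right ?heq
  case hi =>
    intro i hi
    exact Finset.mem_univ _
  case hj =>
    intro j hj
    rw [Finset.mem_filter]
    refine ⟨Finset.mem_univ _, ?_⟩
    have hmem := hL.2 (L.get j) (List.get_mem L j)
    have h1 := (Finset.mem_Icc.mp hmem).1
    show (L.get j - 1) + 1 ∈ L
    rw [(by omega : (L.get j - 1) + 1 = L.get j)]
    exact List.get_mem L j
  case left =>
    intro i hi
    apply Fin.ext
    have h2 : L.get ⟨L.idxOf ((i : ℕ) + 1), _⟩ = (i : ℕ) + 1 :=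
      List.idxOf_get (List.idxOf_lt_length_iff.mpr (Finset.mem_filter.mp hi).2)
    simp only [h2]
    omega
  case right =>
    intro j hj
    apply Fin.ext
    simp only []
    have hmem := hL.2 (L.get j) (List.get_mem L j)
    have h1 := (Finset.mem_Icc.mp hmem).1
    have he : (L.get j - 1) + 1 = L.get j := by omega
    rw [he]
    have hinj := List.nodup_iff_injective_get.mp hL.1
    have hlt : L.idxOf (L.get j) < L.length :=
      List.idxOf_lt_length_iff.mpr (List.get_mem L j)
    have hg : L.get ⟨L.idxOf (L.get j), hlt⟩ = L.get j := List.idxOf_get hlt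
    exact congrArg Fin.val (hinj hg)
  case heq =>
    intro i hi
    have hiL := (Finset.mem_filter.mp hi).2
    rw [psi0, dif_pos hiL]
    have h2 : L.get ⟨L.idxOf ((i : ℕ) + 1), List.idxOf_lt_length_iff.mpr hiL⟩ = (i : ℕ) + 1 :=
      List.idxOf_get _
    rw [h2]




lemma eq_of_pairwise_mem (ρ : ℕ → ℕ) (L : List ℕ) (hL : L.Pairwise (fun x y => ρ y < ρ x)) :
    ∀ L' : List ℕ, L'.Pairwise (fun x y => ρ y < ρ x) → (∀ a, a ∈ L ↔ a ∈ L') → L = L' := by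
  induction L with
  | nil =>
      intro L' _ hmem
      cases L' with
      | nil => rfl
      | cons b l' => exact absurd ((hmem b).mpr (List.mem_cons_self)) List.not_mem_nil
  | cons a l ih =>
      intro L' hL' hmem
      cases L' with
      | nil => exact absurd ((hmem a).mp (List.mem_cons_self)) List.not_mem_nil
      | cons b l' =>
          obtain ⟨hal, hl⟩ := List.pairwise_cons.mp hL
          obtain ⟨hbl', hl'⟩ := List.pairwise_cons.mp hL'
          have hab : a = b := by
            by_contra hne
            have ha' : a ∈ b :: l' := (hmem a).mp (List.mem_cons_self)
            have ha'' : a ∈ l' := by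
              rcases List.mem_cons.mp ha' with h | h
              · exact absurd h hne
              · exact h
            have h1 : ρ a < ρ b := hbl' a ha''
            have hb' : b ∈ a :: l := (hmem b).mpr (List.mem_cons_self)
            have hb'' : b ∈ l := by
              rcases List.mem_cons.mp hb' with h | h
              · exact absurd h.symm hne
              · exact h
            have h2 : ρ b < ρ a := hal b hb''
            omega
          subst hab
          have hml : ∀ x, x ∈ l ↔ x ∈ l' := by
            intro x
            constructor
            · intro hx
              have := (hmem x).mp (List.mem_cons_of_mem a hx)
              rcases List.mem_cons.mp this with h | h
              · exfalso
                have := hal x hx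
                rw [h] at this
                omega
              · exact h
            · intro hx
              have := (hmem x).mpr (List.mem_cons_of_mem a hx)
              rcases List.mem_cons.mp this with h | h
              · exfalso
                have := hbl' x hx
                rw [h] at this
                omega
              · exact h
          rw [ih hl l' hl' hml]

variable (m : ℕ)

/-! multiset encoding of multiplicity functions -/

def toM (c : Fin m → ℕ) : Multiset ℕ := ∑ i : Fin m, Multiset.replicate (c i) ((i : ℕ) + 1)

lemma count_toM (c : Fin m → ℕ) (i : Fin m) : (toM m c).count ((i : ℕ) + 1) = c i := by
  classical
  rw [toM, Multiset.count_sum']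
  rw [Finset.sum_eq_single i]
  · rw [Multiset.count_replicate, if_pos rfl]
  · intro j _ hji
    rw [Multiset.count_replicate, if_neg (by intro h; exact hji (by ext; omega))]
  · intro h
    exact absurd (Finset.mem_univ _) h

lemma mem_toM (c : Fin m → ℕ) (a : ℕ) :
    a ∈ toM m c ↔ ∃ i : Fin m, c i ≠ 0 ∧ a = (i : ℕ) + 1 := by
  rw [toM, Multiset.mem_sum]
  constructor
  · rintro ⟨i, _, hi⟩
    rw [Multiset.mem_replicate] at hi
    exact ⟨i, hi.1, hi.2⟩
  · rintro ⟨i, hne, ha⟩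
    exact ⟨i, Finset.mem_univ _, Multiset.mem_replicate.mpr ⟨hne, ha⟩⟩

lemma sum_toM (c : Fin m → ℕ) : (toM m c).sum = wsum m c := by
  rw [toM, wsum]
  rw [show ((∑ i : Fin m, Multiset.replicate (c i) ((i : ℕ) + 1)).sum)
      = ∑ i : Fin m, (Multiset.replicate (c i) ((i : ℕ) + 1)).sum from
    map_sum Multiset.sumAddMonoidHom _ _]
  apply Finset.sum_congr rfl
  intro i _
  rw [Multiset.sum_replicate, smul_eq_mul, mul_comm]

lemma parts_toM {n : ℕ} (P : n.Partition) (hb : ∀ x ∈ P.parts, x ≤ m) :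
    toM m (fun i => P.parts.count ((i : ℕ) + 1)) = P.parts := by
  classical
  ext a
  by_cases ha : 1 ≤ a ∧ a ≤ m
  · have hi : a = ((⟨a - 1, by omega⟩ : Fin m) : ℕ) + 1 := by simp; omega
    rw [hi, count_toM]
  · rw [Multiset.count_eq_zero.mpr, Multiset.count_eq_zero.mpr]
    · intro hmem
      have h1 := P.parts_pos hmem
      have h2 := hb a hmem
      omega
    · rw [mem_toM]
      rintro ⟨i, _, h⟩
      have := i.isLt
      omega

/-- Equivalence between bounded distinct-multiplicity partitions and multiplicity functions. -/
lemma fm_eq_card (n : ℕ) :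
    fm m n = Nat.card {c : Fin m → ℕ // distinctVals m c ∧ wsum m c = n} := by
  rw [fm]
  apply Nat.card_congr
  refine
    { toFun := fun P => ⟨fun i => P.1.parts.count ((i : ℕ) + 1), ?_, ?_⟩
      invFun := fun c => ⟨⟨toM m c.1, ?_, ?_⟩, ?_, ?_⟩
      left_inv := ?_
      right_inv := ?_ }
  · -- distinctVals
    intro i j hi hij
    have hi' : P.1.parts.count ((i : ℕ) + 1) ≠ 0 := hi
    show P.1.parts.count ((i : ℕ) + 1) ≠ P.1.parts.count ((j : ℕ) + 1)
    by_cases hj : P.1.parts.count ((j : ℕ) + 1) = 0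
    · rw [hj]; exact hi'
    · have hmi : ((i : ℕ) + 1) ∈ P.1.parts := by
        by_contra hc
        exact hi (Multiset.count_eq_zero.mpr hc)
      have hmj : ((j : ℕ) + 1) ∈ P.1.parts := by
        by_contra hc
        exact hj (Multiset.count_eq_zero.mpr hc)
      exact P.2.2 _ hmi _ hmj (by intro h; exact hij (by ext; omega))
  · -- wsum 
    rw [← sum_toM, parts_toM m P.1 P.2.1]
    exact P.1.parts_sum
  · -- parts positive
    intro a ha
    rw [mem_toM] at ha
    obtain ⟨i, _, hai⟩ := ha
    omega
  · -- parts sum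
    rw [sum_toM]
    exact c.2.2
  · -- bound
    intro x hx
    rw [mem_toM] at hx
    obtain ⟨i, _, hxi⟩ := hx
    have := i.isLt
    omega
  · -- distinctMult
    intro a ha b hb hab
    rw [mem_toM] at ha hb
    obtain ⟨i, hi0, rfl⟩ := ha
    obtain ⟨j, hj0, rfl⟩ := hb
    rw [count_toM, count_toM]
    exact c.2.1 i j hi0 (by intro h; exact hab (by rw [h]))
  · -- left_inv
    intro P
    apply Subtype.ext
    apply Nat.Partition.ext
    exact parts_toM m P.1 P.2.1
  · -- right_inv
    intro c
    apply Subtype.ext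
    funext i
    exact count_toM m c.1 i

/-! the finset of admissible lists -/

def LL : Finset (List ℕ) := ((List.range' 1 m).sublists.flatMap List.permutations).toFinset

lemma mem_LL (L : List ℕ) : L ∈ LL m ↔ okL m L := by
  rw [LL, List.mem_toFinset, List.mem_flatMap]
  constructor
  · rintro ⟨S, hS, hLS⟩
    rw [List.mem_sublists] at hS
    rw [List.mem_permutations] at hLS
    have hndS : S.Nodup := hS.nodup (List.nodup_range')
    refine ⟨hLS.symm.nodup hndS, ?_⟩
    intro a ha
    have : a ∈ S := hLS.mem_iff.mp ha
    have := hS.mem this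
    rw [List.mem_range'] at this
    obtain ⟨i, hi, rfl⟩ := this
    rw [Finset.mem_Icc]
    omega
  · rintro ⟨hnd, hmem⟩
    have hsub : L ⊆ List.range' 1 m := by
      intro a ha
      rw [List.mem_range']
      have := Finset.mem_Icc.mp (hmem a ha)
      exact ⟨a - 1, by omega, by omega⟩
    obtain ⟨S, hperm, hsl⟩ := List.Nodup.subperm hnd hsub
    exact ⟨S, List.mem_sublists.mpr hsl, List.mem_permutations.mpr hperm.symm⟩

lemma range'_mem_LL : List.range' 1 m ∈ LL m := by
  rw [mem_LL]
  refine ⟨List.nodup_range', ?_⟩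
  intro a ha
  rw [List.mem_range'] at ha
  obtain ⟨i, hi, rfl⟩ := ha
  rw [Finset.mem_Icc]
  omega



variable (m : ℕ)

def SolT (L : List ℕ) (n : ℕ) :=
  {t : Fin L.length → ℕ // (∀ j, 1 ≤ t j) ∧ ∑ j : Fin L.length, pA L j.val * t j = n}

lemma cnt_SolT (L : List ℕ) (n : ℕ) : cnt L.length (pA L) n = Nat.card (SolT L n) := rfl

lemma index_get {L : List ℕ} (hnd : L.Nodup) (p : Fin L.length) :
    L.idxOf (L.get p) = p.val := by
  have hinj := List.nodup_iff_injective_get.mp hnd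
  have hlt : L.idxOf (L.get p) < L.length :=
    List.idxOf_lt_length_iff.mpr (List.get_mem L p)
  have hg : L.get ⟨L.idxOf (L.get p), hlt⟩ = L.get p := List.idxOf_get hlt
  exact congrArg Fin.val (hinj hg)

lemma psi0_get {L : List ℕ} (hok : okL m L) (t : Fin L.length → ℕ)
    (p : Fin L.length) (i : Fin m) (hi : (i : ℕ) + 1 = L.get p) :
    psi0 m L t i = ssum t p.val := by
  rw [psi0, dif_pos (by rw [hi]; exact List.get_mem L p)]
  congr 1
  rw [hi]
  exact index_get hok.1 p

lemma get_sub_lt {L : List ℕ} (hok : okL m L) (p : Fin L.length) : L.get p - 1 < m := by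
  have := Finset.mem_Icc.mp (hok.2 (L.get p) (List.get_mem L p))
  omega

lemma get_pos {L : List ℕ} (hok : okL m L) (p : Fin L.length) : 1 ≤ L.get p :=
  (Finset.mem_Icc.mp (hok.2 (L.get p) (List.get_mem L p))).1

/-- every distinct-multiplicity function is represented by some list & positive increments -/
lemma exists_rep (c : Fin m → ℕ) (hdc : distinctVals m c) :
    ∃ (L : List ℕ) (_ : okL m L) (t : Fin L.length → ℕ),
      (∀ l, 1 ≤ t l) ∧ psi0 m L t = c ∧ (∑ l, t l = Finset.univ.sup c) := by
  classical
  suffices H : ∀ (N : ℕ) (c : Fin m → ℕ), distinctVals m c →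
      (Finset.univ.filter (fun i => c i ≠ 0)).card = N →
      ∃ (L : List ℕ) (_ : okL m L) (t : Fin L.length → ℕ),
        (∀ l, 1 ≤ t l) ∧ psi0 m L t = c ∧ (∑ l, t l = Finset.univ.sup c) by
    exact H _ c hdc rfl
  intro N
  induction N using Nat.strong_induction_on with
  | _ N ih =>
    intro c hdc hcard
    rcases Nat.eq_zero_or_pos N with rfl | hN
    · have hzero : ∀ i, c i = 0 := by
        intro i
        by_contra hc
        have : i ∈ Finset.univ.filter (fun i => c i ≠ 0) := by
          rw [Finset.mem_filter]; exact ⟨Finset.mem_univ _, hc⟩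
        have := Finset.card_pos.mpr ⟨i, this⟩
        omega
      refine ⟨[], ⟨List.nodup_nil, by simp⟩, fun l => 1, fun l => le_refl _, ?_, ?_⟩
      · funext i
        rw [psi0, dif_neg List.not_mem_nil, hzero i]
      · have hs : Finset.univ.sup c = 0 := by
          apply Nat.le_antisymm _ (Nat.zero_le _)
          apply Finset.sup_le
          intro i _
          rw [hzero i]
        rw [hs]
        show (∑ _l : Fin 0, (1:ℕ)) = 0
        simp
    · have hne : (Finset.univ.filter (fun i => c i ≠ 0)).Nonempty := by
        rw [← Finset.card_pos]; omega
      obtain ⟨i₀, hi₀mem, hmax⟩ := Finset.exists_max_image _ c hne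
      have hi₀ : c i₀ ≠ 0 := (Finset.mem_filter.mp hi₀mem).2
      set c' := Function.update c i₀ 0 with hc'
      have hc'app : ∀ i, i ≠ i₀ → c' i = c i := fun i hi => Function.update_of_ne hi _ _
      have hc'i₀ : c' i₀ = 0 := Function.update_self _ _ _
      have hlt : ∀ i, c' i < c i₀ := by
        intro i
        by_cases hii : i = i₀
        · subst hii; rw [hc'i₀]; omega
        · rw [hc'app i hii]
          by_cases h0 : c i = 0
          · omega
          · have hle : c i ≤ c i₀ := hmax i (by rw [Finset.mem_filter]; exact ⟨Finset.mem_univ _, h0⟩)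
            have := hdc i i₀ h0 hii
            omega
      have hsupp' : Finset.univ.filter (fun i => c' i ≠ 0)
          = (Finset.univ.filter (fun i => c i ≠ 0)).erase i₀ := by
        ext i
        rw [Finset.mem_erase, Finset.mem_filter, Finset.mem_filter]
        constructor
        · intro ⟨h1, h2⟩
          have hii : i ≠ i₀ := by
            intro hc
            subst hc
            exact h2 hc'i₀
          rw [hc'app i hii] at h2
          exact ⟨hii, h1, h2⟩
        · intro ⟨hii, h1, h2⟩
          rw [← hc'app i hii] at h2
          exact ⟨h1, h2⟩
      have hdc' : distinctVals m c' := by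
        intro i j hi hij
        have hii : i ≠ i₀ := by
          intro hc; subst hc; exact hi hc'i₀
        rw [hc'app i hii]
        by_cases hjj : j = i₀
        · subst hjj
          rw [hc'i₀]
          rw [hc'app i hii] at hi
          exact hi
        · rw [hc'app j hjj]
          rw [hc'app i hii] at hi
          exact hdc i j hi hij
      obtain ⟨L', hok', t', ht1', hpsi', hsum'⟩ := ih (N - 1) (by omega) c' hdc'
        (by rw [hsupp', Finset.card_erase_of_mem hi₀mem, hcard])
      have hsup' : Finset.univ.sup c' < c i₀ := by
        have hbot : (⊥ : ℕ) < c i₀ := by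
          simp only [bot_eq_zero]
          omega
        exact (Finset.sup_lt_iff hbot).mpr (fun i _ => hlt i)
      have hsupc : Finset.univ.sup c = c i₀ := by
        apply le_antisymm
        · apply Finset.sup_le
          intro i _
          by_cases h0 : c i = 0
          · omega
          · exact hmax i (by rw [Finset.mem_filter]; exact ⟨Finset.mem_univ _, h0⟩)
        · exact Finset.le_sup (Finset.mem_univ i₀)
      have hi₀L' : ((i₀ : ℕ) + 1) ∉ L' := by
        intro hc
        have := (psi0_ne_zero_iff m ht1' i₀).mpr hc
        rw [hpsi'] at this
        exact this hc'i₀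
      refine ⟨((i₀ : ℕ) + 1) :: L', ⟨List.nodup_cons.mpr ⟨hi₀L', hok'.1⟩, ?_⟩,
        Fin.cons (c i₀ - Finset.univ.sup c') t', ?_, ?_, ?_⟩
      · intro a ha
        rcases List.mem_cons.mp ha with rfl | h
        · rw [Finset.mem_Icc]
          have := i₀.isLt
          omega
        · exact hok'.2 a h
      · intro l
        refine Fin.cases ?_ ?_ l
        · rw [Fin.cons_zero]; omega
        · intro p; rw [Fin.cons_succ]; exact ht1' p
      · funext i
        by_cases hii : i = i₀
        · subst hii
          rw [psi0, dif_pos (List.mem_cons_self), List.idxOf_cons_self]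
          show ssum (Fin.cons (c i - Finset.univ.sup c') t' : Fin (L'.length + 1) → ℕ) 0 = c i
          rw [ssum_zero_total, Fin.sum_univ_succ]
          simp only [Fin.cons_zero, Fin.cons_succ]
          rw [hsum']
          omega
        · have hane : (i : ℕ) + 1 ≠ (i₀ : ℕ) + 1 := by
            intro hc
            exact hii (by ext; omega)
          by_cases haL' : ((i : ℕ) + 1) ∈ L'
          · rw [psi0, dif_pos (List.mem_cons.mpr (Or.inr haL')),
              List.idxOf_cons_ne _ hane.symm]
            show ssum (Fin.cons (c i₀ - Finset.univ.sup c') t') (L'.idxOf ((i : ℕ) + 1) + 1) = c i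
            rw [ssum_cons_succ]
            have : psi0 m L' t' i = c' i := by rw [hpsi']
            rw [psi0, dif_pos haL'] at this
            rw [this, hc'app i hii]
          · rw [psi0, dif_neg (by
              intro hc
              rcases List.mem_cons.mp hc with h | h
              · exact hane h
              · exact haL' h)]
            by_contra hc0
            have hci : c i ≠ 0 := fun h => hc0 h.symm
            have : c' i ≠ 0 := by rw [hc'app i hii]; exact hci
            rw [← hpsi'] at this
            exact haL' ((psi0_ne_zero_iff m ht1' i).mp this)
      · show (∑ l : Fin (L'.length + 1),
            (Fin.cons (c i₀ - Finset.univ.sup c') t' : Fin (L'.length + 1) → ℕ) l)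
            = Finset.univ.sup c
        rw [Fin.sum_univ_succ]
        simp only [Fin.cons_zero, Fin.cons_succ]
        rw [hsum', hsupc]
        omega

/-- the main counting identity -/
lemma psi_inj_lists {L L' : List ℕ} (hok : okL m L) (hok' : okL m L')
    {t : Fin L.length → ℕ} {t' : Fin L'.length → ℕ}
    (ht1 : ∀ l, 1 ≤ t l) (ht1' : ∀ l, 1 ≤ t' l)
    (h : psi0 m L t = psi0 m L' t') : L = L' ∧ HEq t t' := by
  classical
  have hLeq : L = L' := by
    set ρ : ℕ → ℕ := fun a => if h : a - 1 < m then psi0 m L t ⟨a - 1, h⟩ else 0 with hρ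
    have hρget : ∀ p : Fin L.length, ρ (L.get p) = ssum t p.val := by
      intro p
      rw [hρ]
      simp only
      rw [dif_pos (get_sub_lt m hok p)]
      exact psi0_get m hok t p _ (by
        have := get_pos m hok p
        show L.get p - 1 + 1 = L.get p
        omega)
    have hρget' : ∀ p : Fin L'.length, ρ (L'.get p) = ssum t' p.val := by
      intro p
      rw [hρ]
      simp only
      rw [dif_pos (get_sub_lt m hok' p)]
      rw [h]
      exact psi0_get m hok' t' p _ (by
        have := get_pos m hok' p
        show L'.get p - 1 + 1 = L'.get p
        omega)
    apply eq_of_pairwise_mem ρ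
    · rw [List.pairwise_iff_get]
      intro p q hpq
      rw [hρget p, hρget q]
      exact ssum_strict t ht1 hpq p.isLt
    · rw [List.pairwise_iff_get]
      intro p q hpq
      rw [hρget' p, hρget' q]
      exact ssum_strict t' ht1' hpq p.isLt
    · intro a
      constructor
      · intro ha
        have h1 := Finset.mem_Icc.mp (hok.2 a ha)
        have hi : ((⟨a - 1, by omega⟩ : Fin m) : ℕ) + 1 = a := by
          show a - 1 + 1 = a
          omega
        have := (psi0_ne_zero_iff m ht1 (⟨a - 1, by omega⟩ : Fin m)).mpr (by rw [hi]; exact ha)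
        rw [h] at this
        have := (psi0_ne_zero_iff m ht1' _).mp this
        rwa [hi] at this
      · intro ha
        have h1 := Finset.mem_Icc.mp (hok'.2 a ha)
        have hi : ((⟨a - 1, by omega⟩ : Fin m) : ℕ) + 1 = a := by
          show a - 1 + 1 = a
          omega
        have := (psi0_ne_zero_iff m ht1' (⟨a - 1, by omega⟩ : Fin m)).mpr (by rw [hi]; exact ha)
        rw [← h] at this
        have := (psi0_ne_zero_iff m ht1 _).mp this
        rwa [hi] at this
  subst hLeq
  have hteq : t = t' := by
    have hssum : ∀ v : ℕ, ssum t v = ssum t' v := by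
      intro v
      rcases Nat.lt_or_ge v L.length with hv | hv
      · have hgp := get_pos m hok (⟨v, hv⟩ : Fin L.length)
        have hi : ((⟨L.get ⟨v, hv⟩ - 1, get_sub_lt m hok ⟨v, hv⟩⟩ : Fin m) : ℕ) + 1
            = L.get ⟨v, hv⟩ := by
          show L.get ⟨v, hv⟩ - 1 + 1 = L.get ⟨v, hv⟩
          omega
        have e1 := psi0_get m hok t ⟨v, hv⟩ _ hi
        have e2 := psi0_get m hok t' ⟨v, hv⟩ _ hi
        rw [← e1, ← e2, h]
      · rw [ssum_of_ge t hv, ssum_of_ge t' hv]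
    funext j
    have h1 := ssum_step t j.isLt
    have h2 := ssum_step t' j.isLt
    have e1 := hssum j.val
    have e2 := hssum (j.val + 1)
    have hj : (⟨j.val, j.isLt⟩ : Fin L.length) = j := by ext; rfl
    rw [hj] at h1 h2
    omega
  exact ⟨rfl, heq_of_eq hteq⟩

lemma fm_eq_sum (n : ℕ) : fm m n = ∑ L ∈ LL m, cnt L.length (pA L) n := by
  classical
  rw [fm_eq_card m n]
  let Sg := (L : {L // L ∈ LL m}) × SolT L.1 n
  let Cs := {c : Fin m → ℕ // distinctVals m c ∧ wsum m c = n}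
  let Ψ : Sg → Cs := fun x =>
    ⟨psi0 m x.1.1 x.2.1,
      psi0_distinct m ((mem_LL m x.1.1).mp x.1.2).1 x.2.2.1,
      by rw [wsum_psi0 m ((mem_LL m x.1.1).mp x.1.2) x.2.1]; exact x.2.2.2⟩
  have hbij : Function.Bijective Ψ := by
    constructor
    · rintro ⟨⟨L, hLL⟩, s⟩ ⟨⟨L', hLL'⟩, s'⟩ h
      have h' : psi0 m L s.1 = psi0 m L' s'.1 := congrArg Subtype.val h
      obtain ⟨hLeq, hteq⟩ := psi_inj_lists m ((mem_LL m L).mp hLL) ((mem_LL m L').mp hLL')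
        s.2.1 s'.2.1 h'
      subst hLeq
      have hs : s = s' := Subtype.ext (eq_of_heq hteq)
      subst hs
      rfl
    · rintro ⟨c, hdc, hwc⟩
      obtain ⟨L, hok, t, ht1, hpsi, _⟩ := exists_rep m c hdc
      refine ⟨⟨⟨L, (mem_LL m L).mpr hok⟩, ⟨t, ht1, ?_⟩⟩, ?_⟩
      · rw [← wsum_psi0 m hok t, hpsi]
        exact hwc
      · apply Subtype.ext
        exact hpsi
  have h1 : Nat.card Sg = Nat.card Cs := Nat.card_eq_of_bijective Ψ hbij
  haveI hfin : ∀ L : {L // L ∈ LL m}, Finite (SolT L.1 n) := by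
    intro L
    have hok : okL m L.1 := (mem_LL m L.1).mp L.2
    exact cnt_finite L.1.length (pA L.1) n (fun j hj => (pA_mem_Icc m hok hj).1)
  letI : ∀ L : {L // L ∈ LL m}, Fintype (SolT L.1 n) := fun L => Fintype.ofFinite _
  rw [← h1, Nat.card_eq_fintype_card, Fintype.card_sigma]
  rw [← Finset.sum_coe_sort (LL m) (fun L => cnt L.length (pA L) n)]
  apply Finset.sum_congr rfl
  intro L _
  rw [cnt_SolT, Nat.card_eq_fintype_card]



variable (m : ℕ)

noncomputable def PP : ℚ[X] :=
  ∑ L ∈ LL m, X ^ (∑ j ∈ Finset.range L.length, pA L j) *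
    ((1 - X) ^ (m - L.length) * RL m L)

lemma coe_poly_prod (L : List ℕ) :
    ((DLp L : ℚ[X]) : PowerSeries ℚ)
      = ∏ j ∈ Finset.range L.length, (1 - (PowerSeries.X : PowerSeries ℚ) ^ (pA L j)) := by
  show Polynomial.coeToPowerSeries.ringHom (DLp L) = _
  rw [DLp, map_prod]
  apply Finset.prod_congr rfl
  intro j _
  rw [map_sub, map_one, map_pow]
  rw [show (Polynomial.coeToPowerSeries.ringHom (X : ℚ[X])) = PowerSeries.X from
    (show ((X : ℚ[X]) : PowerSeries ℚ) = PowerSeries.X from Polynomial.coe_X)]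

lemma coe_mul_poly (p q : ℚ[X]) :
    ((p * q : ℚ[X]) : PowerSeries ℚ) = (p : PowerSeries ℚ) * (q : PowerSeries ℚ) :=
  Polynomial.coe_mul p q

/-- the central power series identity -/
lemma main_identity (hm : 1 ≤ m) :
    (PowerSeries.mk fun n => (fm m n : ℚ)) *
        (((1 - Polynomial.X) ^ m * QQ m : ℚ[X]) : PowerSeries ℚ)
      = ((PP m : ℚ[X]) : PowerSeries ℚ) := by
  classical
  -- decompose F as a sum
  have hF : (PowerSeries.mk fun n => (fm m n : ℚ))
      = ∑ L ∈ LL m, PowerSeries.mk (fun n => (cnt L.length (pA L) n : ℚ)) := by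
    apply PowerSeries.ext
    intro n
    rw [map_sum]
    simp only [PowerSeries.coeff_mk]
    rw [fm_eq_sum m n]
    push_cast
    rfl
  rw [hF, Finset.sum_mul]
  rw [show ((PP m : ℚ[X]) : PowerSeries ℚ)
      = Polynomial.coeToPowerSeries.ringHom (PP m) from rfl, PP, map_sum]
  apply Finset.sum_congr rfl
  intro L hL
  have hok : okL m L := (mem_LL m L).mp hL
  have hkey := key_poly_factor m hm hok
  rw [hkey]
  rw [coe_mul_poly]
  rw [coe_poly_prod]
  rw [show PowerSeries.mk (fun n => (cnt L.length (pA L) n : ℚ)) *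
        ((∏ j ∈ Finset.range L.length, (1 - (PowerSeries.X : PowerSeries ℚ) ^ (pA L j))) *
          (((1 - X) ^ (m - L.length) * RL m L : ℚ[X]) : PowerSeries ℚ))
      = (PowerSeries.mk (fun n => (cnt L.length (pA L) n : ℚ)) *
          ∏ j ∈ Finset.range L.length, (1 - (PowerSeries.X : PowerSeries ℚ) ^ (pA L j))) *
        (((1 - X) ^ (m - L.length) * RL m L : ℚ[X]) : PowerSeries ℚ) from by ring]
  rw [mk_cnt_mul L.length (pA L) (fun j hj => (pA_mem_Icc m hok hj).1)]
  rw [map_mul, map_mul, map_pow]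
  rw [show (Polynomial.coeToPowerSeries.ringHom (X : ℚ[X])) = PowerSeries.X from
    (show ((X : ℚ[X]) : PowerSeries ℚ) = PowerSeries.X from Polynomial.coe_X)]
  rw [show (Polynomial.coeToPowerSeries.ringHom ((1 - X : ℚ[X]) ^ (m - L.length)))
      = ((((1 - X : ℚ[X]) ^ (m - L.length)) : ℚ[X]) : PowerSeries ℚ) from rfl]
  rw [show (Polynomial.coeToPowerSeries.ringHom (RL m L))
      = ((RL m L : ℚ[X]) : PowerSeries ℚ) from rfl]
  rw [← Polynomial.coe_mul]

lemma PP_eval_one_pos (hm : 1 ≤ m) : 0 < (PP m).eval 1 := by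
  rw [PP, eval_finset_sum]
  apply Finset.sum_pos'
  · intro L _
    rw [eval_mul, eval_mul, eval_pow, eval_pow, eval_X, eval_sub, eval_one, eval_X, one_pow,
      one_mul, sub_self]
    rcases Nat.eq_zero_or_pos (m - L.length) with h | h
    · rw [h, pow_zero, one_mul]
      exact le_of_lt (RL_eval_one_pos m L)
    · rw [zero_pow (by omega), zero_mul]
  · refine ⟨List.range' 1 m, range'_mem_LL m, ?_⟩
    rw [eval_mul, eval_mul, eval_pow, eval_pow, eval_X, eval_sub, eval_one, eval_X, one_pow,
      one_mul, sub_self]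
    rw [List.length_range', Nat.sub_self, pow_zero, one_mul]
    exact RL_eval_one_pos m _

end GFx

/-- `∑_{n≥0} f_m(n) qⁿ` is a rational function `P(q)/((1-q)^m Q(q))` whose poles are all roots
of unity; the pole at `q = 1` has order exactly `m` (`P(1) ≠ 0`, `Q(1) ≠ 0`), and every other
pole (a root `z` of `Q`) is a root of unity of multiplicity strictly less than `m`. -/
theorem gf_fm_rational_poles (m : ℕ) (hm : 1 ≤ m) :
    ∃ P Q : Polynomial ℚ,
      Q ≠ 0 ∧
      (PowerSeries.mk fun n => (fm m n : ℚ)) * (((1 - Polynomial.X) ^ m * Q : Polynomial ℚ) :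
          PowerSeries ℚ) = (P : PowerSeries ℚ) ∧
      P.eval 1 ≠ 0 ∧ Q.eval 1 ≠ 0 ∧
      ∀ z : ℂ, (Q.map (algebraMap ℚ ℂ)).IsRoot z →
        (∃ k : ℕ, 0 < k ∧ z ^ k = 1) ∧
          (Q.map (algebraMap ℚ ℂ)).rootMultiplicity z < m := by
  refine ⟨GFx.PP m, GFx.QQ m, GFx.QQ_ne_zero m, GFx.main_identity m hm, ?_, ?_, ?_⟩
  · have := GFx.PP_eval_one_pos m hm
    positivity
  · have := GFx.QQ_eval_one_pos m
    positivity
  · intro z hz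
    exact GFx.QQ_roots m hm z hz
end
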